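/- arXiv:1408.5797 — 4 statements merged into one kernel-verified Lean document; each statement's English description precedes it below -/
import Mathlib

section
/- Let k, ℓ ≥ 1 and write points of ℝᵏ × ℝˡ as z = (t, y); fix z₀ = (t₀, y₀). Let u be an upper semicontinuous function of t alone, defined on a neighborhood of t₀ in ℝᵏ with values in [−∞, ∞), and let φ be a polynomial function of degree at most 2 on ℝᵏ × ℝˡ. Suppose there is a neighborhood N of z₀ such that u(t) < φ(t, y) for all (t, y) ∈ N with (t, y) ≠ z₀, and u(t₀) = φ(z₀). Then there exist a polynomial φ̄ of degree at most 2 on ℝᵏ and a neighborhood N′ of z₀ such that u(t) ≤ φ̄(t) ≤ φ(t, y) for all (t, y) ∈ N′. -/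
open Set Filter Topology RealInnerProductSpace

noncomputable section

def IsQuadPoly {E : Type*} [AddCommGroup E] [Module ℝ E] (φ : E → ℝ) : Prop :=
  ∃ (c : ℝ) (l : E →ₗ[ℝ] ℝ) (q : E →ₗ[ℝ] E →ₗ[ℝ] ℝ), ∀ z, φ z = c + l z + q z z

set_option maxHeartbeats 1000000 in
/-- If an upper semicontinuous function `u` of `t` alone is touched from above at
`z₀ = (t₀, y₀)` (strictly away from `z₀`) by a polynomial `φ(t,y)` of degree at most 2,
then there is a polynomial `ψ(t)` of degree at most 2 with `u(t) ≤ ψ(t) ≤ φ(t,y)`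
near `z₀`. -/
theorem stmt0 (k l : ℕ) (hk : 1 ≤ k) (hl : 1 ≤ l)
    (t₀ : EuclideanSpace ℝ (Fin k)) (y₀ : EuclideanSpace ℝ (Fin l))
    (u : EuclideanSpace ℝ (Fin k) → EReal)
    (hu_usc : ∃ V ∈ 𝓝 t₀, UpperSemicontinuousOn u V)
    (hu_fin : ∀ᶠ t in 𝓝 t₀, u t < ⊤)
    (φ : EuclideanSpace ℝ (Fin k) × EuclideanSpace ℝ (Fin l) → ℝ)
    (hφ : IsQuadPoly φ)
    (hlt : ∀ᶠ z : EuclideanSpace ℝ (Fin k) × EuclideanSpace ℝ (Fin l) in 𝓝 (t₀, y₀),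
      z ≠ (t₀, y₀) → u z.1 < ((φ z : ℝ) : EReal))
    (heq : u t₀ = ((φ (t₀, y₀) : ℝ) : EReal)) :
    ∃ ψ : EuclideanSpace ℝ (Fin k) → ℝ, IsQuadPoly ψ ∧
      ∀ᶠ z : EuclideanSpace ℝ (Fin k) × EuclideanSpace ℝ (Fin l) in 𝓝 (t₀, y₀),
        u z.1 ≤ ((ψ z.1 : ℝ) : EReal) ∧ ψ z.1 ≤ φ z := by
  classical
  obtain ⟨c, L, q, hφeq⟩ := hφ
  set ι₁ : EuclideanSpace ℝ (Fin k) →ₗ[ℝ] EuclideanSpace ℝ (Fin k) × EuclideanSpace ℝ (Fin l) :=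
    LinearMap.inl ℝ _ _ with hι₁
  set ι₂ : EuclideanSpace ℝ (Fin l) →ₗ[ℝ] EuclideanSpace ℝ (Fin k) × EuclideanSpace ℝ (Fin l) :=
    LinearMap.inr ℝ _ _ with hι₂
  set z₀ : EuclideanSpace ℝ (Fin k) × EuclideanSpace ℝ (Fin l) := (t₀, y₀) with hz₀
  set aF : EuclideanSpace ℝ (Fin l) →ₗ[ℝ] ℝ :=
    L ∘ₗ ι₂ + (q z₀) ∘ₗ ι₂ + (q.flip z₀) ∘ₗ ι₂ with haF
  set Q2 : EuclideanSpace ℝ (Fin l) →ₗ[ℝ] EuclideanSpace ℝ (Fin l) →ₗ[ℝ] ℝ :=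
    q.compl₁₂ ι₂ ι₂ with hQ2
  set Bb : EuclideanSpace ℝ (Fin k) →ₗ[ℝ] EuclideanSpace ℝ (Fin l) →ₗ[ℝ] ℝ :=
    q.compl₁₂ ι₁ ι₂ + (q.compl₁₂ ι₂ ι₁).flip with hBb
  set Qsym : EuclideanSpace ℝ (Fin l) →ₗ[ℝ] EuclideanSpace ℝ (Fin l) →ₗ[ℝ] ℝ :=
    Q2 + Q2.flip with hQsym
  -- expansion identity
  have hzsum : ∀ (s : EuclideanSpace ℝ (Fin k)) (h : EuclideanSpace ℝ (Fin l)),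
      ((t₀ + s, y₀ + h) : EuclideanSpace ℝ (Fin k) × EuclideanSpace ℝ (Fin l))
        = z₀ + (ι₁ s + ι₂ h) := by
    intro s h
    simp [hι₁, hι₂, hz₀, Prod.ext_iff]
  have key : ∀ (s : EuclideanSpace ℝ (Fin k)) (h : EuclideanSpace ℝ (Fin l)),
      φ (t₀ + s, y₀ + h) =
      φ z₀ + (L (ι₁ s) + q z₀ (ι₁ s) + q (ι₁ s) z₀ + q (ι₁ s) (ι₁ s))
        + aF h + Bb s h + Q2 h h := by
    intro s h
    rw [hzsum]
    simp only [hφeq, haF, hBb, hQ2, map_add, LinearMap.add_apply, LinearMap.coe_comp,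
      Function.comp_apply, LinearMap.flip_apply, LinearMap.compl₁₂_apply]
    ring
  -- positivity at t = t₀
  obtain ⟨ε, hε, hball⟩ := Metric.eventually_nhds_iff.mp hlt
  have hpos : ∀ h : EuclideanSpace ℝ (Fin l), h ≠ 0 → ‖h‖ < ε → 0 < aF h + Q2 h h := by
    intro h hne hnorm
    have hdist : dist ((t₀, y₀ + h) : EuclideanSpace ℝ (Fin k) × EuclideanSpace ℝ (Fin l))
        (t₀, y₀) < ε := by
      rw [Prod.dist_eq]
      simp [dist_eq_norm, hnorm, hε]
    have hneq : ((t₀, y₀ + h) : EuclideanSpace ℝ (Fin k) × EuclideanSpace ℝ (Fin l))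
        ≠ (t₀, y₀) := by
      intro hcontra
      exact hne (by simpa using congrArg Prod.snd hcontra)
    have hu := hball hdist hneq
    rw [heq] at hu
    have hu' : φ (t₀, y₀) < φ (t₀, y₀ + h) := by exact_mod_cast hu
    rw [show ((t₀, y₀ + h) : EuclideanSpace ℝ (Fin k) × EuclideanSpace ℝ (Fin l))
        = (t₀ + 0, y₀ + h) by simp] at hu'
    rw [key 0 h] at hu'
    simp only [map_zero, LinearMap.map_zero, LinearMap.zero_apply] at hu'
    have hzz : φ z₀ = φ (t₀, y₀) := rfl
    rw [hzz] at hu'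
    linarith
  have hQpos : ∀ h : EuclideanSpace ℝ (Fin l), h ≠ 0 → 0 < Q2 h h := by
    intro h hne
    have hn : (0 : ℝ) < ‖h‖ := norm_pos_iff.mpr hne
    set r : ℝ := ε / (2 * ‖h‖) with hr
    have hrpos : 0 < r := by positivity
    have hhalf : (ε / (2 * ‖h‖)) * ‖h‖ = ε / 2 := by
      field_simp
    have hnr : ‖r • h‖ < ε := by
      rw [norm_smul, Real.norm_eq_abs, abs_of_pos hrpos, hr, hhalf]
      linarith
    have h1 := hpos (r • h) (smul_ne_zero hrpos.ne' hne) hnr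
    have h2 := hpos (-(r • h)) (by simpa using smul_ne_zero hrpos.ne' hne) (by simpa using hnr)
    simp only [map_smul, map_neg, LinearMap.neg_apply, LinearMap.smul_apply, smul_eq_mul,
      LinearMap.map_smul, LinearMap.map_neg, neg_neg] at h1 h2
    have hrr : 0 < r * (r * Q2 h h) := by linarith
    nlinarith [mul_pos hrpos hrpos]
  have hA0 : ∀ h : EuclideanSpace ℝ (Fin l), aF h = 0 := by
    intro h
    rcases eq_or_ne h 0 with rfl | hne
    · simp
    have hQ := hQpos h hne
    by_contra hA
    have hAabs : 0 < |aF h| := abs_pos.mpr hA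
    have hn : (0 : ℝ) < ‖h‖ := norm_pos_iff.mpr hne
    set r : ℝ := min (ε / (2 * ‖h‖)) (|aF h| / (2 * Q2 h h)) with hr
    have hrpos : 0 < r := lt_min (by positivity) (by positivity)
    have hhalf : (ε / (2 * ‖h‖)) * ‖h‖ = ε / 2 := by
      field_simp
    have hnr : ‖r • h‖ < ε := by
      rw [norm_smul, Real.norm_eq_abs, abs_of_pos hrpos]
      calc r * ‖h‖ ≤ (ε / (2 * ‖h‖)) * ‖h‖ :=
            mul_le_mul_of_nonneg_right (min_le_left _ _) hn.le
        _ < ε := by rw [hhalf]; linarith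
    have h1 := hpos (r • h) (smul_ne_zero hrpos.ne' hne) hnr
    have h2 := hpos (-(r • h)) (by simpa using smul_ne_zero hrpos.ne' hne) (by simpa using hnr)
    simp only [map_smul, map_neg, LinearMap.neg_apply, LinearMap.smul_apply, smul_eq_mul,
      LinearMap.map_smul, LinearMap.map_neg, neg_neg] at h1 h2
    have hr' : r * |aF h| < r * (r * Q2 h h) := by
      rcases abs_cases (aF h) with ⟨he, _⟩ | ⟨he, _⟩ <;> rw [he] <;> linarith
    have hlt' : |aF h| < r * Q2 h h := (mul_lt_mul_iff_right₀ hrpos).mp hr'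
    have hle : r * Q2 h h ≤ |aF h| / 2 := by
      have hmr := min_le_right (ε / (2 * ‖h‖)) (|aF h| / (2 * Q2 h h))
      calc r * Q2 h h ≤ (|aF h| / (2 * Q2 h h)) * Q2 h h :=
            mul_le_mul_of_nonneg_right (hr ▸ hmr) hQ.le
        _ = |aF h| / 2 := by field_simp
    linarith
  -- duality
  set rep : (EuclideanSpace ℝ (Fin l) →ₗ[ℝ] ℝ) →ₗ[ℝ] EuclideanSpace ℝ (Fin l) :=
    ((InnerProductSpace.toDual ℝ (EuclideanSpace ℝ (Fin l))).symm.toLinearEquiv.toLinearMap).comp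
      (LinearMap.toContinuousLinearMap :
        (EuclideanSpace ℝ (Fin l) →ₗ[ℝ] ℝ) ≃ₗ[ℝ] (EuclideanSpace ℝ (Fin l) →L[ℝ] ℝ)).toLinearMap
      with hrepdef
  have hrep : ∀ (f : EuclideanSpace ℝ (Fin l) →ₗ[ℝ] ℝ) (x : EuclideanSpace ℝ (Fin l)),
      ⟪rep f, x⟫ = f x := by
    intro f x
    simp [hrepdef, InnerProductSpace.toDual_symm_apply]
  set T : EuclideanSpace ℝ (Fin l) →ₗ[ℝ] EuclideanSpace ℝ (Fin l) := rep.comp Qsym with hTdef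
  have hT : ∀ h h' : EuclideanSpace ℝ (Fin l), ⟪T h, h'⟫ = Q2 h h' + Q2 h' h := by
    intro h h'
    rw [hTdef]
    simp only [LinearMap.coe_comp, Function.comp_apply]
    rw [hrep]
    simp only [hQsym, LinearMap.add_apply, LinearMap.flip_apply]
  have hTinj : Function.Injective T := by
    rw [injective_iff_map_eq_zero]
    intro h hT0
    by_contra hne
    have hinner := hT h h
    rw [hT0] at hinner
    simp only [inner_zero_left] at hinner
    have := hQpos h hne
    linarith
  have hTbij : Function.Bijective T := ⟨hTinj, LinearMap.injective_iff_surjective.mp hTinj⟩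
  set Teq : EuclideanSpace ℝ (Fin l) ≃ₗ[ℝ] EuclideanSpace ℝ (Fin l) :=
    LinearEquiv.ofBijective T hTbij with hTeq
  set bv : EuclideanSpace ℝ (Fin k) →ₗ[ℝ] EuclideanSpace ℝ (Fin l) := rep.comp Bb with hbv
  have hbvapp : ∀ (s : EuclideanSpace ℝ (Fin k)) (x : EuclideanSpace ℝ (Fin l)),
      ⟪bv s, x⟫ = Bb s x := by
    intro s x
    rw [hbv]
    simp only [LinearMap.coe_comp, Function.comp_apply]
    rw [hrep]
  set m : EuclideanSpace ℝ (Fin k) →ₗ[ℝ] EuclideanSpace ℝ (Fin l) :=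
    -(Teq.symm.toLinearMap.comp bv) with hm
  have hTm : ∀ s, T (m s) = -(bv s) := by
    intro s
    have happ : T (Teq.symm (bv s)) = bv s := by
      have := Teq.apply_symm_apply (bv s)
      rwa [hTeq, LinearEquiv.ofBijective_apply] at this
    simp only [hm, LinearMap.neg_apply, LinearMap.coe_comp, Function.comp_apply, map_neg,
      LinearEquiv.coe_coe]
    rw [happ]
  -- main pointwise inequality
  have hmain : ∀ (t : EuclideanSpace ℝ (Fin k)) (y : EuclideanSpace ℝ (Fin l)),
      φ (t, y₀ + m (t - t₀)) ≤ φ (t, y) := by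
    intro t y
    set s : EuclideanSpace ℝ (Fin k) := t - t₀ with hs
    set h : EuclideanSpace ℝ (Fin l) := y - y₀ with hh
    set e : EuclideanSpace ℝ (Fin l) := h - m s with he
    have ht1 : φ (t, y) = φ z₀ + (L (ι₁ s) + q z₀ (ι₁ s) + q (ι₁ s) z₀ + q (ι₁ s) (ι₁ s))
        + aF h + Bb s h + Q2 h h := by
      have hthis := key s h
      rw [show t₀ + s = t by rw [hs]; abel, show y₀ + h = y by rw [hh]; abel] at hthis
      exact hthis
    have ht2 := key s (m s)
    rw [show t₀ + s = t by rw [hs]; abel] at ht2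
    have hhe : h = m s + e := by rw [he]; abel
    have hexp1 : Bb s h = Bb s (m s) + Bb s e := by rw [hhe, map_add]
    have hexp2 : Q2 h h = Q2 (m s) (m s) + (Q2 (m s) e + Q2 e (m s)) + Q2 e e := by
      rw [hhe]
      simp only [map_add, LinearMap.add_apply]
      ring
    have hinner1 : Bb s e = -(Q2 (m s) e + Q2 e (m s)) := by
      have h1 := hbvapp s e
      have h2 := hT (m s) e
      rw [hTm s, inner_neg_left, h1] at h2
      linarith
    have hQe : 0 ≤ Q2 e e := by
      rcases eq_or_ne e 0 with he0 | hne
      · simp [he0]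
      · exact (hQpos e hne).le
    rw [ht1, ht2, hA0, hA0, hexp1, hexp2, hinner1]
    linarith
  -- the polynomial ψ
  set ψ : EuclideanSpace ℝ (Fin k) → ℝ := fun t => φ (t, y₀ + m (t - t₀)) with hψ
  have hψ0 : ψ t₀ = φ (t₀, y₀) := by simp [hψ]
  have hψquad : IsQuadPoly ψ := by
    set G : EuclideanSpace ℝ (Fin k) →ₗ[ℝ] EuclideanSpace ℝ (Fin k) × EuclideanSpace ℝ (Fin l) :=
      LinearMap.prod LinearMap.id m with hG
    set v₀ : EuclideanSpace ℝ (Fin k) × EuclideanSpace ℝ (Fin l) := (0, y₀ - m t₀) with hv₀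
    have hFt : ∀ t, ((t, y₀ + m (t - t₀)) :
        EuclideanSpace ℝ (Fin k) × EuclideanSpace ℝ (Fin l)) = v₀ + G t := by
      intro t
      simp only [hG, hv₀, LinearMap.prod_apply, Function.prod, LinearMap.id_coe, id_eq,
        Prod.mk_add_mk, Prod.ext_iff, map_sub]
      constructor
      · abel
      · abel
    refine ⟨c + L v₀ + q v₀ v₀, L ∘ₗ G + (q v₀) ∘ₗ G + ((q.flip v₀) ∘ₗ G), q.compl₁₂ G G, ?_⟩
    intro t
    show φ (t, y₀ + m (t - t₀)) = _
    rw [hFt, hφeq]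
    simp only [map_add, LinearMap.add_apply, LinearMap.coe_comp, Function.comp_apply,
      LinearMap.flip_apply, LinearMap.compl₁₂_apply]
    ring
  -- eventual bound for u
  have hmcont : Continuous (fun t : EuclideanSpace ℝ (Fin k) =>
      ((t, y₀ + m (t - t₀)) : EuclideanSpace ℝ (Fin k) × EuclideanSpace ℝ (Fin l))) := by
    have h1 : Continuous m := m.continuous_of_finiteDimensional
    exact continuous_id.prodMk
      (continuous_const.add (h1.comp (continuous_id.sub continuous_const)))
  have htend : Tendsto (fun t : EuclideanSpace ℝ (Fin k) =>
      ((t, y₀ + m (t - t₀)) : EuclideanSpace ℝ (Fin k) × EuclideanSpace ℝ (Fin l)))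
      (𝓝 t₀) (𝓝 (t₀, y₀)) := by
    have := hmcont.tendsto t₀
    simpa using this
  have hpull := htend.eventually hlt
  have hu : ∀ᶠ t in 𝓝 t₀, u t ≤ ((ψ t : ℝ) : EReal) := by
    filter_upwards [hpull] with t ht
    by_cases htt : t = t₀
    · subst htt
      rw [heq, hψ0]
    · have hne : ((t, y₀ + m (t - t₀)) :
          EuclideanSpace ℝ (Fin k) × EuclideanSpace ℝ (Fin l)) ≠ (t₀, y₀) := by
        intro hcontra
        exact htt (congrArg Prod.fst hcontra)
      exact (ht hne).le
  refine ⟨ψ, hψquad, ?_⟩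
  have hfst : Tendsto (Prod.fst : EuclideanSpace ℝ (Fin k) × EuclideanSpace ℝ (Fin l) →
      EuclideanSpace ℝ (Fin k)) (𝓝 (t₀, y₀)) (𝓝 t₀) := continuousAt_fst
  filter_upwards [hfst.eventually hu] with z hz
  have h2 := hmain z.1 z.2
  rw [Prod.mk.eta] at h2
  exact ⟨hz, h2⟩

end
end

section
/- Let F ⊆ Sym²(ℝⁿ) be a subequation. For t > 0 define the fiber (R_F)_t = {(λ, a) ∈ ℝ² : (λ/t)·P_{e⊥} + a·P_e ∈ F for every unit vector e ∈ ℝⁿ}. Let ψ be an upper semicontinuous function with values in [−∞, ∞) on an open interval I ⊆ (0, ∞), and let u(x) = ψ(|x|) on the annulus A = {x ∈ ℝⁿ : |x| ∈ I}. Then u is F-subharmonic on A if and only if ψ is R_F-subharmonic on I, i.e. for every t₀ ∈ I and every C² function φ defined near t₀ with ψ ≤ φ near t₀ and ψ(t₀) = φ(t₀), one has (φ′(t₀), φ″(t₀)) ∈ (R_F)_{t₀}. -/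
open Set Filter Topology Matrix

noncomputable section

abbrev EucSp (n : ℕ) := EuclideanSpace ℝ (Fin n)

/-- The rank-one orthogonal projection matrix `P_e = e eᵀ` associated to a vector `e`. -/
def projMat {n : ℕ} (e : EucSp n) : Matrix (Fin n) (Fin n) ℝ :=
  Matrix.of fun i j => e i * e j

/-- A (pure second-order, constant coefficient) subequation: a closed set of symmetric
matrices satisfying positivity `F + 𝒫 ⊆ F`. -/
def IsSubequation {n : ℕ} (F : Set (Matrix (Fin n) (Fin n) ℝ)) : Prop :=
  (∀ A ∈ F, A.IsSymm) ∧ IsClosed F ∧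
    ∀ A ∈ F, ∀ P : Matrix (Fin n) (Fin n) ℝ, P.PosSemidef → A + P ∈ F

/-- The Hessian matrix of a function `φ : ℝⁿ → ℝ` at `x`. -/
def hess {n : ℕ} (φ : EucSp n → ℝ) (x : EucSp n) : Matrix (Fin n) (Fin n) ℝ :=
  Matrix.of fun i j =>
    iteratedFDeriv ℝ 2 φ x ![EuclideanSpace.single i (1 : ℝ), EuclideanSpace.single j (1 : ℝ)]

/-- `u` is `F`-subharmonic (a viscosity subsolution) on `X`. -/
def IsFSubharmonicOn {n : ℕ} (F : Set (Matrix (Fin n) (Fin n) ℝ))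
    (X : Set (EucSp n)) (u : EucSp n → EReal) : Prop :=
  UpperSemicontinuousOn u X ∧ (∀ x ∈ X, u x < ⊤) ∧
    ∀ x₀ ∈ X, ∀ φ : EucSp n → ℝ, ContDiffAt ℝ 2 φ x₀ →
      (∀ᶠ x in 𝓝[X] x₀, u x ≤ ((φ x : ℝ) : EReal)) → u x₀ = ((φ x₀ : ℝ) : EReal) →
      hess φ x₀ ∈ F

/-- The fiber at `t > 0` of the radial subequation `R_F` associated to `F`. -/
def radialFiber {n : ℕ} (F : Set (Matrix (Fin n) (Fin n) ℝ)) (t : ℝ) : Set (ℝ × ℝ) :=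
  {q | ∀ e : EucSp n, ‖e‖ = 1 →
    (q.1 / t) • ((1 : Matrix (Fin n) (Fin n) ℝ) - projMat e) + q.2 • projMat e ∈ F}

/-- `ψ` is `R_F`-subharmonic on `I ⊆ (0,∞)`. -/
def IsRadialSubharmonicOn {n : ℕ} (F : Set (Matrix (Fin n) (Fin n) ℝ))
    (I : Set ℝ) (ψ : ℝ → EReal) : Prop :=
  UpperSemicontinuousOn ψ I ∧ (∀ t ∈ I, ψ t < ⊤) ∧
    ∀ t₀ ∈ I, ∀ φ : ℝ → ℝ, ContDiffAt ℝ 2 φ t₀ →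
      (∀ᶠ t in 𝓝[I] t₀, ψ t ≤ ((φ t : ℝ) : EReal)) → ψ t₀ = ((φ t₀ : ℝ) : EReal) →
      (deriv φ t₀, deriv (deriv φ) t₀) ∈ radialFiber F t₀




lemma usc_comp_tendsto {α β : Type*} [TopologicalSpace α] [TopologicalSpace β]
    {f : β → EReal} {g : α → β} {s : Set α} {t : Set β} {a : α}
    (hf : UpperSemicontinuousWithinAt f t (g a))
    (hg : Filter.Tendsto g (𝓝[s] a) (𝓝[t] (g a))) :
    UpperSemicontinuousWithinAt (fun x => f (g x)) s a := fun y hy => hg.eventually (hf y hy)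

lemma eucl_sum_single {n : ℕ} (x : EucSp n) :
    x = ∑ i, x i • EuclideanSpace.single i (1:ℝ) := by
  ext j
  have : (∑ i, x i • EuclideanSpace.single i (1:ℝ)) j = ∑ i, (x i • EuclideanSpace.single i (1:ℝ)) j := by rw [WithLp.ofLp_sum, Finset.sum_apply]
  rw [this]
  simp [EuclideanSpace.single_apply]

lemma bilin_expand {n : ℕ} (B : EucSp n →L[ℝ] EucSp n →L[ℝ] ℝ) (v w : EucSp n) :
    B v w = ∑ i, ∑ j, v i * w j * B (EuclideanSpace.single i (1:ℝ)) (EuclideanSpace.single j (1:ℝ)) := by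
  conv_lhs => rw [eucl_sum_single v, eucl_sum_single w]
  simp only [map_sum, _root_.map_smul, ContinuousLinearMap.sum_apply, ContinuousLinearMap.coe_sum',
    Finset.sum_apply, ContinuousLinearMap.smul_apply, ContinuousLinearMap.coe_smul',
    Pi.smul_apply, smul_eq_mul]
  rw [Finset.sum_comm]
  simp only [Finset.mul_sum]
  exact Finset.sum_congr rfl fun i _ => Finset.sum_congr rfl fun j _ => by ring

lemma isLocalMin_deriv2_nonneg {g : ℝ → ℝ} {a L : ℝ}
    (hdiff : ∀ᶠ t in 𝓝 a, DifferentiableAt ℝ g t)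
    (hL : HasDerivAt (deriv g) L a) (hmin : IsLocalMin g a) : 0 ≤ L := by
  by_contra hneg
  push_neg at hneg
  have h0 : deriv g a = 0 := hmin.deriv_eq_zero
  have hslope : Tendsto (slope (deriv g) a) (𝓝[≠] a) (𝓝 L) :=
    hasDerivAt_iff_tendsto_slope.1 hL
  have hev : ∀ᶠ t in 𝓝[≠] a, slope (deriv g) a t < 0 :=
    hslope.eventually (eventually_lt_nhds hneg)
  rw [eventually_nhdsWithin_iff] at hev
  obtain ⟨δ, hδ, hball⟩ := Metric.eventually_nhds_iff.1 (hev.and (hdiff.and (show ∀ᶠ t in 𝓝 a, g a ≤ g t from hmin)))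
  set b := a + δ/2 with hb
  have hab : a < b := by simp [hb]; linarith
  have hmem : ∀ t ∈ Icc a b, dist t a < δ := by
    intro t ht
    rw [Real.dist_eq, abs_lt]
    constructor <;> simp [hb] at ht ⊢ <;> linarith [ht.1, ht.2]
  have hcont : ContinuousOn g (Icc a b) := fun t ht =>
    ((hball (hmem t ht)).2.1).continuousAt.continuousWithinAt
  have hderivneg : ∀ t ∈ Ioo a b, deriv g t < 0 := by
    intro t ht
    have h1 := (hball (hmem t (Ioo_subset_Icc_self ht))).1 (ne_of_gt ht.1)
    rw [slope_def_field, h0] at h1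
    have h2 : (0:ℝ) < t - a := by linarith [ht.1]
    have := div_neg_iff.1 (by simpa [div_eq_iff] using h1)
    rcases this with ⟨hp, hq⟩ | ⟨hp, hq⟩
    · linarith
    · linarith
  have hanti : StrictAntiOn g (Icc a b) := by
    refine strictAntiOn_of_deriv_neg (convex_Icc a b) hcont ?_
    intro t ht
    rw [interior_Icc] at ht
    exact hderivneg t ht
  have := hanti (left_mem_Icc.2 hab.le) (right_mem_Icc.2 hab.le) hab
  have hle := (hball (hmem b (right_mem_Icc.2 hab.le))).2.2
  exact absurd hle (by simpa using this.not_ge)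



namespace KeyMat
variable {n : ℕ}

lemma real_conjT (A : Matrix (Fin n) (Fin n) ℝ) : Aᴴ = Aᵀ := by
  ext i j; simp [Matrix.conjTranspose_apply]

lemma mul_vmv (A : Matrix (Fin n) (Fin n) ℝ) (x y : Fin n → ℝ) :
    A * vecMulVec x y = vecMulVec (A *ᵥ x) y := by
  ext i j
  simp only [Matrix.mul_apply, vecMulVec_apply, Matrix.mulVec, dotProduct,
    Finset.sum_mul]
  exact Finset.sum_congr rfl fun k _ => by ring

lemma vmv_mul (x y : Fin n → ℝ) (A : Matrix (Fin n) (Fin n) ℝ) :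
    vecMulVec x y * A = vecMulVec x (Aᵀ *ᵥ y) := by
  ext i j
  simp only [Matrix.mul_apply, vecMulVec_apply, Matrix.mulVec, dotProduct,
    Matrix.transpose_apply, Finset.mul_sum]
  exact Finset.sum_congr rfl fun k _ => by ring

lemma vmv_vmv (x y z w : Fin n → ℝ) :
    vecMulVec x y * vecMulVec z w = (y ⬝ᵥ z) • vecMulVec x w := by
  ext i j
  simp only [Matrix.mul_apply, vecMulVec_apply, Matrix.smul_apply, dotProduct,
    smul_eq_mul, Finset.sum_mul, Finset.mul_sum]
  exact Finset.sum_congr rfl fun k _ => by ring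

lemma vmv_transpose (x y : Fin n → ℝ) : (vecMulVec x y)ᵀ = vecMulVec y x := by
  ext i j; simp [vecMulVec_apply, Matrix.transpose_apply, mul_comm]

lemma dp_self_nonneg (x : Fin n → ℝ) : 0 ≤ x ⬝ᵥ x :=
  Finset.sum_nonneg fun i _ => mul_self_nonneg _

lemma key_matrix (e : Fin n → ℝ) (he : e ⬝ᵥ e = 1)
    (M : Matrix (Fin n) (Fin n) ℝ) (hM : Mᵀ = M) (c ε : ℝ) (hε : 0 < ε)
    (hS : ∀ w : Fin n → ℝ, w ⬝ᵥ e = 0 → c * (w ⬝ᵥ w) ≤ w ⬝ᵥ (M *ᵥ w)) :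
    ∃ v : Fin n → ℝ, v ⬝ᵥ e = 0 ∧
      (M + ε • ((1 : Matrix (Fin n) (Fin n) ℝ) - vecMulVec e e) -
        (c • ((1 : Matrix (Fin n) (Fin n) ℝ) - vecMulVec e e) +
          ((e + v) ⬝ᵥ (M *ᵥ (e + v)) - c * (v ⬝ᵥ v)) • vecMulVec e e)).PosSemidef := by
  classical
  set Pe : Matrix (Fin n) (Fin n) ℝ := vecMulVec e e with hPe
  set Pp : Matrix (Fin n) (Fin n) ℝ := 1 - Pe with hPp
  have hPeVec : ∀ y : Fin n → ℝ, Pe *ᵥ y = (e ⬝ᵥ y) • e := by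
    intro y; ext i
    simp only [hPe, Matrix.mulVec, dotProduct, vecMulVec_apply, Pi.smul_apply,
      smul_eq_mul]
    rw [Finset.sum_mul]
    exact Finset.sum_congr rfl fun k _ => by ring
  have hPpVec : ∀ y : Fin n → ℝ, Pp *ᵥ y = y - (e ⬝ᵥ y) • e := by
    intro y; rw [hPp, Matrix.sub_mulVec, Matrix.one_mulVec, hPeVec]
  have hPeT : Peᵀ = Pe := by rw [hPe, vmv_transpose]
  have hPpT : Ppᵀ = Pp := by rw [hPp, Matrix.transpose_sub, Matrix.transpose_one, hPeT]
  have hPePe : Pe * Pe = Pe := by rw [hPe, vmv_vmv, he, one_smul]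
  have hPpPe : Pp * Pe = 0 := by
    rw [hPp, Matrix.sub_mul, Matrix.one_mul, hPePe, sub_self]
  have hPePp : Pe * Pp = 0 := by
    rw [hPp, Matrix.mul_sub, Matrix.mul_one, hPePe, sub_self]
  have hPpPp : Pp * Pp = Pp := by
    rw [hPp, Matrix.mul_sub, Matrix.mul_one, ← hPp, hPpPe, sub_zero]
  have hvm : ∀ (A : Matrix (Fin n) (Fin n) ℝ), Aᵀ = A → ∀ x : Fin n → ℝ, x ᵥ* A = A *ᵥ x := by
    intro A hA x; conv_lhs => rw [← hA]
    rw [Matrix.vecMul_transpose]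
  have hdotA : ∀ (A : Matrix (Fin n) (Fin n) ℝ), Aᵀ = A → ∀ x y : Fin n → ℝ,
      x ⬝ᵥ (A *ᵥ y) = (A *ᵥ x) ⬝ᵥ y := by
    intro A hA x y; rw [Matrix.dotProduct_mulVec, hvm A hA]
  set m₀ : ℝ := e ⬝ᵥ (M *ᵥ e) with hm₀
  set b : Fin n → ℝ := M *ᵥ e - m₀ • e with hb
  have hbe : b ⬝ᵥ e = 0 := by
    rw [hb, sub_dotProduct, smul_dotProduct, ← hdotA M hM e e, ← hm₀]
    simp [he]
  have hebd : e ⬝ᵥ b = 0 := by rw [dotProduct_comm]; exact hbe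
  have hPpb : Pp *ᵥ b = b := by rw [hPpVec, hebd, zero_smul, sub_zero]
  have hMe : M *ᵥ e = b + m₀ • e := by rw [hb, sub_add_cancel]
  set T : Matrix (Fin n) (Fin n) ℝ := Pp * M * Pp + (ε - c) • Pp + Pe with hT
  have hTt : Tᵀ = T := by
    rw [hT, Matrix.transpose_add, Matrix.transpose_add, Matrix.transpose_smul, hPpT, hPeT,
      Matrix.transpose_mul, Matrix.transpose_mul, hPpT, hM, Matrix.mul_assoc]
  have hsq : ∀ y : Fin n → ℝ, (Pp *ᵥ y) ⬝ᵥ (Pp *ᵥ y) = y ⬝ᵥ (Pp *ᵥ y) := by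
    intro y
    rw [hdotA Pp hPpT, Matrix.mulVec_mulVec, hPpPp, dotProduct_comm]
  have hMform : ∀ y : Fin n → ℝ, (Pp *ᵥ y) ⬝ᵥ (M *ᵥ (Pp *ᵥ y)) = y ⬝ᵥ ((Pp * M * Pp) *ᵥ y) := by
    intro y
    rw [← Matrix.mulVec_mulVec, ← Matrix.mulVec_mulVec, hdotA Pp hPpT]
  have hTform : ∀ y : Fin n → ℝ, y ⬝ᵥ (T *ᵥ y) =
      (Pp *ᵥ y) ⬝ᵥ (M *ᵥ (Pp *ᵥ y)) + (ε - c) * ((Pp *ᵥ y) ⬝ᵥ (Pp *ᵥ y)) + (e ⬝ᵥ y) ^ 2 := by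
    intro y
    rw [hT, Matrix.add_mulVec, Matrix.add_mulVec, dotProduct_add,
      dotProduct_add, hMform y, hsq y]
    congr 1
    · congr 1
      rw [Matrix.smul_mulVec, dotProduct_smul, smul_eq_mul]
    · rw [hPeVec, dotProduct_smul, smul_eq_mul, dotProduct_comm, sq]
  have hwperp : ∀ y : Fin n → ℝ, (Pp *ᵥ y) ⬝ᵥ e = 0 := by
    intro y
    rw [hPpVec, sub_dotProduct, smul_dotProduct, smul_eq_mul, he, mul_one,
      dotProduct_comm, sub_self]
  have hTPD : T.PosDef := by
    rw [posDef_iff_dotProduct_mulVec]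
    constructor
    · rw [Matrix.IsHermitian, real_conjT, hTt]
    · intro y hy
      rw [star_trivial]
      have h1 := hS (Pp *ᵥ y) (hwperp y)
      have h2 : 0 ≤ (Pp *ᵥ y) ⬝ᵥ (Pp *ᵥ y) := dp_self_nonneg _
      rw [hTform y]
      rcases eq_or_ne (Pp *ᵥ y) 0 with hw | hw
      · have hey : e ⬝ᵥ y ≠ 0 := by
          intro h0
          apply hy
          have h3 := hPpVec y
          rw [hw, h0, zero_smul, sub_zero] at h3
          exact h3.symm
        have h4 : 0 < (e ⬝ᵥ y) ^ 2 := by positivity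
        rw [hw]
        simp only [dotProduct_zero, zero_dotProduct, mul_zero]
        linarith
      · have hww : 0 < (Pp *ᵥ y) ⬝ᵥ (Pp *ᵥ y) := by
          rcases lt_or_eq_of_le h2 with h | h
          · exact h
          · exact absurd (dotProduct_self_eq_zero.mp h.symm) hw
        nlinarith [sq_nonneg (e ⬝ᵥ y)]
  have hTunit : IsUnit T.det := (Matrix.isUnit_iff_isUnit_det T).mp hTPD.isUnit
  have hTinv : T * T⁻¹ = 1 := Matrix.mul_nonsing_inv T hTunit
  have hTinv' : T⁻¹ * T = 1 := Matrix.nonsing_inv_mul T hTunit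
  have hTinvT : (T⁻¹)ᵀ = T⁻¹ := by rw [Matrix.transpose_nonsing_inv, hTt]
  set u : Fin n → ℝ := T⁻¹ *ᵥ b with hu
  have hTu : T *ᵥ u = b := by rw [hu, Matrix.mulVec_mulVec, hTinv, Matrix.one_mulVec]
  have hPpe : Pp *ᵥ e = 0 := by rw [hPpVec, he, one_smul, sub_self]
  have hTe : T *ᵥ e = e := by
    rw [hT, Matrix.add_mulVec, Matrix.add_mulVec, hPeVec, he, one_smul,
      Matrix.smul_mulVec, hPpe, smul_zero, ← Matrix.mulVec_mulVec, hPpe,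
      Matrix.mulVec_zero]
    simp
  have hTinve : T⁻¹ *ᵥ e = e := by
    conv_lhs => rw [← hTe, Matrix.mulVec_mulVec, hTinv', Matrix.one_mulVec]
  have hue : u ⬝ᵥ e = 0 := by
    rw [hu, dotProduct_comm, hdotA T⁻¹ hTinvT e b, hTinve, dotProduct_comm]
    exact hbe
  have hedu : e ⬝ᵥ u = 0 := by rw [dotProduct_comm]; exact hue
  have hPpu : Pp *ᵥ u = u := by rw [hPpVec, hedu, zero_smul, sub_zero]
  have hkey : b ⬝ᵥ u = u ⬝ᵥ (M *ᵥ u) + (ε - c) * (u ⬝ᵥ u) := by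
    have h1 := hTform u
    rw [hPpu, hedu] at h1
    rw [dotProduct_comm, ← hTu, h1]
    ring
  -- the quadratic coefficient
  have hdotMu : e ⬝ᵥ (M *ᵥ u) = b ⬝ᵥ u := by
    rw [hdotA M hM, hMe, add_dotProduct, smul_dotProduct, hedu, smul_zero,
      add_zero]
  have hdotMe : u ⬝ᵥ (M *ᵥ e) = b ⬝ᵥ u := by
    rw [hMe, dotProduct_add, dotProduct_smul, hue, smul_zero, add_zero,
      dotProduct_comm]
  have hq : (e + -u) ⬝ᵥ (M *ᵥ (e + -u)) - c * ((-u) ⬝ᵥ (-u)) =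
      m₀ - 2 * (b ⬝ᵥ u) + u ⬝ᵥ (M *ᵥ u) - c * (u ⬝ᵥ u) := by
    rw [Matrix.mulVec_add, add_dotProduct, dotProduct_add,
      dotProduct_add, Matrix.mulVec_neg, dotProduct_neg,
      dotProduct_neg, neg_dotProduct, neg_dotProduct,
      neg_dotProduct, hdotMu, hdotMe, dotProduct_neg, neg_neg, ← hm₀]
    ring
  -- M decomposition
  have hPeM : Pe * M = vecMulVec e (M *ᵥ e) := by rw [hPe, vmv_mul, hM]
  have hMPe : M * Pe = vecMulVec (M *ᵥ e) e := by rw [hPe, mul_vmv]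
  have hMee : (M *ᵥ e) ⬝ᵥ e = m₀ := by rw [← hdotA M hM, ← hm₀]
  have hPeMPe : Pe * M * Pe = m₀ • Pe := by
    rw [hPeM, hPe, vmv_vmv, hMee]
  have hexp : Pp * M * Pp = M - Pe * M - M * Pe + Pe * M * Pe := by
    rw [hPp]
    noncomm_ring
  have hvmv_eb : vecMulVec e b = vecMulVec e (M *ᵥ e) - m₀ • Pe := by
    ext i j
    simp [hb, hPe, vecMulVec_apply, Matrix.sub_apply, Matrix.smul_apply, Pi.sub_apply,
      Pi.smul_apply, smul_eq_mul]
    ring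
  have hvmv_be : vecMulVec b e = vecMulVec (M *ᵥ e) e - m₀ • Pe := by
    ext i j
    simp [hb, hPe, vecMulVec_apply, Matrix.sub_apply, Matrix.smul_apply, Pi.sub_apply,
      Pi.smul_apply, smul_eq_mul]
    ring
  have hMdec : M = m₀ • Pe + vecMulVec e b + vecMulVec b e + Pp * M * Pp := by
    rw [hvmv_eb, hvmv_be, hexp, hPeMPe, hPeM, hMPe]
    abel
  -- the congruence matrix
  set R : Matrix (Fin n) (Fin n) ℝ := vecMulVec u e + Pp with hR
  have hRt : Rᵀ = vecMulVec e u + Pp := by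
    rw [hR, Matrix.transpose_add, vmv_transpose, hPpT]
  have hTR1 : T * vecMulVec u e = vecMulVec b e := by rw [mul_vmv, hTu]
  have hvmvT : vecMulVec e u * T = vecMulVec e b := by rw [vmv_mul, hTt, hTu]
  have t2 : vecMulVec e b * Pp = vecMulVec e b := by
    rw [vmv_mul, hPpT, hPpb]
  have t3 : Pp * (T * vecMulVec u e) = vecMulVec b e := by
    rw [hTR1, mul_vmv, hPpb]
  have t4 : Pp * T * Pp = Pp * M * Pp + (ε - c) • Pp := by
    have h6 : Pp * T * Pp = (Pp * Pp) * M * (Pp * Pp) + (ε - c) • (Pp * Pp * Pp)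
        + Pp * Pe * Pp := by rw [hT]; noncomm_ring
    rw [h6]
    simp only [hPpPp, hPpPe, Matrix.zero_mul, add_zero]
  have e1 : Rᵀ * T = vecMulVec e b + Pp * T := by rw [hRt, Matrix.add_mul, hvmvT]
  have hRTR : Rᵀ * T * R = (b ⬝ᵥ u) • Pe + vecMulVec e b + vecMulVec b e
      + Pp * M * Pp + (ε - c) • Pp := by
    rw [e1, hR, Matrix.add_mul, Matrix.mul_add, Matrix.mul_add, vmv_vmv e b u e, ← hPe,
      t2, Matrix.mul_assoc Pp T (vecMulVec u e), t3, t4]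
    abel
  -- final matrix identity
  have hcoef : m₀ - ((e + -u) ⬝ᵥ (M *ᵥ (e + -u)) - c * ((-u) ⬝ᵥ (-u)))
      = b ⬝ᵥ u + ε * (u ⬝ᵥ u) := by
    rw [hq]; linarith [hkey]
  refine ⟨-u, by rw [neg_dotProduct, hue, neg_zero], ?_⟩
  have hX : M + ε • Pp - (c • Pp + ((e + -u) ⬝ᵥ (M *ᵥ (e + -u)) - c * ((-u) ⬝ᵥ (-u))) • Pe)
      = Rᵀ * T * R + (ε * (u ⬝ᵥ u)) • Pe := by
    rw [hRTR]
    nth_rewrite 1 [hMdec]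
    ext i j
    simp only [Matrix.add_apply, Matrix.sub_apply, Matrix.smul_apply, smul_eq_mul]
    linear_combination (Pe i j) * hcoef
  rw [hX]
  have hPSD1 : (Rᵀ * T * R).PosSemidef := by
    have h1 : R = (Rᵀ)ᴴ := by rw [real_conjT, Matrix.transpose_transpose]
    rw [h1]
    exact hTPD.posSemidef.mul_mul_conjTranspose_same Rᵀ
  have hPSD2 : ((ε * (u ⬝ᵥ u)) • Pe).PosSemidef := by
    rw [posSemidef_iff_dotProduct_mulVec]
    constructor
    · rw [Matrix.IsHermitian, real_conjT, Matrix.transpose_smul, hPeT]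
    · intro y
      rw [star_trivial, Matrix.smul_mulVec, dotProduct_smul, smul_eq_mul,
        hPeVec, dotProduct_smul, smul_eq_mul, dotProduct_comm]
      have h4 : 0 ≤ (e ⬝ᵥ y) * (e ⬝ᵥ y) := mul_self_nonneg _
      have h5 : 0 ≤ ε * (u ⬝ᵥ u) := mul_nonneg hε.le (dp_self_nonneg u)
      have h7 : y ⬝ᵥ e = e ⬝ᵥ y := dotProduct_comm y e
      rw [h7]
      exact mul_nonneg h5 h4
  exact hPSD1.add hPSD2

end KeyMat



lemma comp_curve_derivs {n : ℕ} {Φ : EucSp n → ℝ} {x₀ : EucSp n}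
    (hΦ : ContDiffAt ℝ 2 Φ x₀) {γ γ' : ℝ → EucSp n} {t₀ : ℝ} {d2 : EucSp n}
    (hγ : ∀ t, HasDerivAt γ (γ' t) t) (hγ' : HasDerivAt γ' d2 t₀)
    (hγ0 : γ t₀ = x₀) (hγC : ContDiffAt ℝ 2 γ t₀) :
    ContDiffAt ℝ 2 (fun t => Φ (γ t)) t₀ ∧
    deriv (fun t => Φ (γ t)) t₀ = fderiv ℝ Φ x₀ (γ' t₀) ∧
    deriv (deriv (fun t => Φ (γ t))) t₀ =
      fderiv ℝ (fderiv ℝ Φ) x₀ (γ' t₀) (γ' t₀) + fderiv ℝ Φ x₀ d2 := by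
  have hev : ∀ᶠ y in 𝓝 x₀, ContDiffAt ℝ 2 Φ y := hΦ.eventually (by simp)
  have hcont : ContinuousAt γ t₀ := (hγ t₀).continuousAt
  have hev2 : ∀ᶠ t in 𝓝 t₀, ContDiffAt ℝ 2 Φ (γ t) := hcont.eventually (hγ0 ▸ hev)
  have hD : ∀ᶠ t in 𝓝 t₀, HasDerivAt (fun t => Φ (γ t)) (fderiv ℝ Φ (γ t) (γ' t)) t := by
    filter_upwards [hev2] with t ht
    exact (ht.differentiableAt (by norm_num)).hasFDerivAt.comp_hasDerivAt t (hγ t)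
  have hderiv1 : deriv (fun t => Φ (γ t)) =ᶠ[𝓝 t₀] fun t => fderiv ℝ Φ (γ t) (γ' t) := by
    filter_upwards [hD] with t ht using ht.deriv
  refine ⟨(hγ0 ▸ hΦ).comp t₀ hγC, ?_, ?_⟩
  · rw [hD.self_of_nhds.deriv, hγ0]
  · rw [hderiv1.deriv_eq]
    have hf'' : HasFDerivAt (fderiv ℝ Φ) (fderiv ℝ (fderiv ℝ Φ) x₀) x₀ :=
      ((hΦ.fderiv_right (m := 1) (by norm_num)).differentiableAt (by norm_num)).hasFDerivAt
    have hf''' : HasFDerivAt (fderiv ℝ Φ) (fderiv ℝ (fderiv ℝ Φ) x₀) (γ t₀) := by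
      rw [hγ0]; exact hf''
    have hC : HasDerivAt (fun t => fderiv ℝ Φ (γ t))
        (fderiv ℝ (fderiv ℝ Φ) x₀ (γ' t₀)) t₀ := hf'''.comp_hasDerivAt t₀ (hγ t₀)
    rw [(hC.clm_apply hγ').deriv, hγ0]

-- curve building blocks
section curves
variable {n : ℕ} (e f : EucSp n) (a t₀ : ℝ)

def ω (s : ℝ) : EucSp n := Real.cos (a * s) • e + Real.sin (a * s) • f
def ω1 (s : ℝ) : EucSp n :=
  (-Real.sin (a * s) * a) • e + (Real.cos (a * s) * a) • f
def ω2 (s : ℝ) : EucSp n :=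
  (-(Real.cos (a * s) * a) * a) • e + (-Real.sin (a * s) * a * a) • f

lemma hasDerivAt_ω (s : ℝ) : HasDerivAt (ω e f a) (ω1 e f a s) s := by
  have h1 : HasDerivAt (fun s : ℝ => a * s) a s := by
    simpa using (hasDerivAt_id s).const_mul a
  have hc : HasDerivAt (fun s : ℝ => Real.cos (a * s)) (-Real.sin (a * s) * a) s :=
    (Real.hasDerivAt_cos (a * s)).comp s h1
  have hs : HasDerivAt (fun s : ℝ => Real.sin (a * s)) (Real.cos (a * s) * a) s :=
    (Real.hasDerivAt_sin (a * s)).comp s h1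
  exact (hc.smul_const e).add (hs.smul_const f)

lemma hasDerivAt_ω1 (s : ℝ) : HasDerivAt (ω1 e f a) (ω2 e f a s) s := by
  have h1 : HasDerivAt (fun s : ℝ => a * s) a s := by
    simpa using (hasDerivAt_id s).const_mul a
  have hc : HasDerivAt (fun s : ℝ => -Real.sin (a * s) * a) (-(Real.cos (a * s) * a) * a) s := by
    have := ((Real.hasDerivAt_sin (a * s)).comp s h1).neg.mul_const a
    simpa [mul_comm, mul_left_comm] using this
  have hs : HasDerivAt (fun s : ℝ => Real.cos (a * s) * a) (-Real.sin (a * s) * a * a) s := by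
    have := ((Real.hasDerivAt_cos (a * s)).comp s h1).mul_const a
    simpa [mul_comm, mul_left_comm] using this
  exact (hc.smul_const e).add (hs.smul_const f)

lemma ω_zero : ω e f a 0 = e := by simp [ω]
lemma ω1_zero : ω1 e f a 0 = a • f := by simp [ω1]
lemma ω2_zero : ω2 e f a 0 = (-(a*a)) • e := by simp [ω2]

lemma ω_norm (he : ‖e‖ = 1) (hcase : a = 0 ∨ (‖f‖ = 1 ∧ (inner ℝ e f : ℝ) = 0)) (s : ℝ) :
    ‖ω e f a s‖ = 1 := by
  rcases hcase with h | ⟨hf, hef⟩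
  · simp [ω, h, he]
  · have hfe : (inner ℝ f e : ℝ) = 0 := by rw [real_inner_comm]; exact hef
    have h2 : ‖ω e f a s‖ ^ 2 = 1 := by
      rw [← real_inner_self_eq_norm_sq]
      simp only [ω, inner_add_left, inner_add_right, real_inner_smul_left,
        real_inner_smul_right, real_inner_self_eq_norm_sq, he, hf, hef, hfe]
      simp only [norm_smul, Real.norm_eq_abs, mul_pow, sq_abs, he, hf, one_pow, mul_one]
      linear_combination Real.sin_sq_add_cos_sq (a * s)
    have h4 : (‖ω e f a s‖ - 1) * (‖ω e f a s‖ + 1) = 0 := by nlinarith [h2]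
    rcases mul_eq_zero.1 h4 with h | h
    · linarith
    · linarith [norm_nonneg (ω e f a s)]

-- the moving-radius curve
def xc (s : ℝ) : ℝ → EucSp n := fun t => t • ω e f a (t - t₀)
end curves

section curves2
variable {n : ℕ} (e f : EucSp n) (a t₀ : ℝ)

def xγ : ℝ → EucSp n := fun t => t • ω e f a (t - t₀)
def xγ' : ℝ → EucSp n := fun t => t • ω1 e f a (t - t₀) + ω e f a (t - t₀)

lemma hasDerivAt_xγ (t : ℝ) : HasDerivAt (xγ e f a t₀) (xγ' e f a t₀ t) t := by
  have h1 : HasDerivAt (fun t => ω e f a (t - t₀)) (ω1 e f a (t - t₀)) t := by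
    refine ((hasDerivAt_ω e f a (t - t₀)).scomp t ((hasDerivAt_id t).sub_const t₀)).congr_deriv ?_
    simp
  exact ((hasDerivAt_id t).smul h1).congr_deriv (by simp [xγ'])

lemma hasDerivAt_xγ'_gen (t : ℝ) : HasDerivAt (xγ' e f a t₀)
    (t • ω2 e f a (t - t₀) + ω1 e f a (t - t₀) + ω1 e f a (t - t₀)) t := by
  have h1 : HasDerivAt (fun t => ω e f a (t - t₀)) (ω1 e f a (t - t₀)) t := by
    refine ((hasDerivAt_ω e f a (t - t₀)).scomp t ((hasDerivAt_id t).sub_const t₀)).congr_deriv ?_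
    simp
  have h2 : HasDerivAt (fun t => ω1 e f a (t - t₀)) (ω2 e f a (t - t₀)) t := by
    refine ((hasDerivAt_ω1 e f a (t - t₀)).scomp t ((hasDerivAt_id t).sub_const t₀)).congr_deriv ?_
    simp
  have h3 := ((hasDerivAt_id t).smul h2).add h1
  exact h3.congr_deriv (by simp)

lemma hasDerivAt_xγ' :
    HasDerivAt (xγ' e f a t₀) ((2 * a) • f + (-(a * a) * t₀) • e) t₀ := by
  have h := hasDerivAt_xγ'_gen e f a t₀ t₀
  rw [sub_self, ω1_zero, ω2_zero] at h
  convert h using 1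
  module

lemma contDiff_ω : ContDiff ℝ 2 (ω e f a (n := n)) := by
  apply ContDiff.add
  · exact (Real.contDiff_cos.comp (contDiff_const.mul contDiff_id)).smul contDiff_const
  · exact (Real.contDiff_sin.comp (contDiff_const.mul contDiff_id)).smul contDiff_const

lemma contDiff_xγ : ContDiff ℝ 2 (xγ e f a t₀ (n := n)) :=
  contDiff_id.smul ((contDiff_ω e f a).comp (contDiff_id.sub contDiff_const))

lemma xγ_t₀ : xγ e f a t₀ t₀ = t₀ • e := by simp [xγ, ω_zero]
lemma xγ'_t₀ : xγ' e f a t₀ t₀ = e + (t₀ * a) • f := by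
  simp [xγ', ω_zero, ω1_zero]
  module

lemma xγ_norm (he : ‖e‖ = 1) (hcase : a = 0 ∨ (‖f‖ = 1 ∧ (inner ℝ e f : ℝ) = 0))
    {t : ℝ} (ht : 0 ≤ t) : ‖xγ e f a t₀ t‖ = t := by
  rw [xγ, norm_smul, ω_norm e f a he hcase, Real.norm_eq_abs, abs_of_nonneg ht, mul_one]

-- fixed radius curve
def zγ : ℝ → EucSp n := fun s => t₀ • ω e f a s
def zγ' : ℝ → EucSp n := fun s => t₀ • ω1 e f a s

lemma hasDerivAt_zγ (s : ℝ) : HasDerivAt (zγ e f a t₀) (zγ' e f a t₀ s) s :=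
  (hasDerivAt_ω e f a s).const_smul t₀

lemma hasDerivAt_zγ' : HasDerivAt (zγ' e f a t₀) ((-(a * a) * t₀) • e) 0 := by
  have h := (hasDerivAt_ω1 e f a 0).const_smul t₀
  have h4 : t₀ • ω2 e f a 0 = (-(a * a) * t₀) • e := by rw [ω2_zero]; module
  rw [h4] at h
  exact h

lemma contDiff_zγ : ContDiff ℝ 2 (zγ e f a t₀ (n := n)) :=
  (contDiff_const (c := t₀)).smul (contDiff_ω e f a)

lemma zγ_0 : zγ e f a t₀ 0 = t₀ • e := by simp [zγ, ω_zero]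
lemma zγ'_0 : zγ' e f a t₀ 0 = (t₀ * a) • f := by rw [zγ', ω1_zero]; module
lemma zγ_norm (he : ‖e‖ = 1) (hcase : a = 0 ∨ (‖f‖ = 1 ∧ (inner ℝ e f : ℝ) = 0))
    (ht : 0 ≤ t₀) (s : ℝ) : ‖zγ e f a t₀ s‖ = t₀ := by
  rw [zγ, norm_smul, ω_norm e f a he hcase, Real.norm_eq_abs, abs_of_nonneg ht, mul_one]

end curves2

lemma hess_apply {n : ℕ} (φ : EucSp n → ℝ) (x : EucSp n) (i j : Fin n) :
    hess φ x i j = fderiv ℝ (fderiv ℝ φ) x (EuclideanSpace.single i (1:ℝ))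
      (EuclideanSpace.single j (1:ℝ)) := by
  rw [hess, Matrix.of_apply, iteratedFDeriv_two_apply]
  simp

lemma hess_symm {n : ℕ} {φ : EucSp n → ℝ} {x : EucSp n} (hφ : ContDiffAt ℝ 2 φ x) :
    (hess φ x)ᵀ = hess φ x := by
  have hev : ∀ᶠ y in 𝓝 x, HasFDerivAt φ (fderiv ℝ φ y) y := by
    filter_upwards [hφ.eventually (by simp)] with y hy
    exact (hy.differentiableAt (by norm_num)).hasFDerivAt
  have hx : HasFDerivAt (fderiv ℝ φ) (fderiv ℝ (fderiv ℝ φ) x) x :=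
    ((hφ.fderiv_right (m := 1) (by norm_num)).differentiableAt (by norm_num)).hasFDerivAt
  ext i j
  rw [Matrix.transpose_apply, hess_apply, hess_apply]
  exact second_derivative_symmetric_of_eventually hev hx _ _

def innerCLM (n : ℕ) : EucSp n →L[ℝ] EucSp n →L[ℝ] ℝ :=
  (isBoundedBilinearMap_inner (𝕜 := ℝ) (E := EucSp n)).toContinuousLinearMap

lemma innerCLM_apply {n : ℕ} (x v : EucSp n) : innerCLM n x v = (inner ℝ x v : ℝ) := rfl

lemma inner_self_deriv {n : ℕ} (x : EucSp n) :
    HasFDerivAt (fun y : EucSp n => (inner ℝ y y : ℝ)) ((2:ℝ) • (innerCLM n x)) x := by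
  have h := (hasFDerivAt_id x).inner ℝ (hasFDerivAt_id x)
  have h2 : ((fderivInnerCLM ℝ (id x, id x)).comp
      ((ContinuousLinearMap.id ℝ (EucSp n)).prod (ContinuousLinearMap.id ℝ (EucSp n))))
      = (2:ℝ) • innerCLM n x := by
    ext v
    simp only [ContinuousLinearMap.comp_apply, ContinuousLinearMap.prod_apply,
      ContinuousLinearMap.coe_id', id_eq, fderivInnerCLM_apply,
      ContinuousLinearMap.smul_apply, innerCLM_apply, smul_eq_mul]
    rw [real_inner_comm v x]
    ring
  rw [h2] at h
  exact h

lemma radial_test {n : ℕ} {φ : ℝ → ℝ} {t₀ : ℝ} (ht₀ : 0 < t₀)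
    (hφ : ContDiffAt ℝ 2 φ t₀) (e : EucSp n) (he : ‖e‖ = 1) :
    ContDiffAt ℝ 2 (fun x : EucSp n => φ (Real.sqrt (inner ℝ x x))) (t₀ • e) ∧
    hess (fun x : EucSp n => φ (Real.sqrt (inner ℝ x x))) (t₀ • e) =
      (deriv φ t₀ / t₀) • ((1 : Matrix (Fin n) (Fin n) ℝ) - projMat e) +
        (deriv (deriv φ) t₀) • projMat e := by
  set x₀ : EucSp n := t₀ • e with hx₀def
  have hnx₀ : ‖x₀‖ = t₀ := by
    rw [hx₀def, norm_smul, he, Real.norm_eq_abs, abs_of_pos ht₀, mul_one]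
  have hs₀ : (inner ℝ x₀ x₀ : ℝ) = t₀ ^ 2 := by
    rw [real_inner_self_eq_norm_sq, hnx₀]
  have hsq : Real.sqrt (t₀ ^ 2) = t₀ := Real.sqrt_sq ht₀.le
  have hs₀pos : (0:ℝ) < t₀ ^ 2 := by positivity
  set g : EucSp n → ℝ := fun x => (inner ℝ x x : ℝ) with hgdef
  set χ : ℝ → ℝ := fun s => φ (Real.sqrt s) with hχdef
  set d1 : ℝ := deriv φ t₀ with hd1def
  set d2 : ℝ := deriv (deriv φ) t₀ with hd2def
  set g1 : ℝ → ℝ := fun s => deriv φ (Real.sqrt s) * (1 / (2 * Real.sqrt s)) with hg1def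
  have hgC : ContDiff ℝ 2 g := contDiff_id.inner ℝ contDiff_id
  have hχC : ContDiffAt ℝ 2 χ (t₀ ^ 2) := by
    refine ContDiffAt.comp _ ?_ (Real.contDiffAt_sqrt hs₀pos.ne')
    rw [hsq]; exact hφ
  have hχC' : ContDiffAt ℝ 2 χ (g x₀) := by
    have : g x₀ = t₀ ^ 2 := hs₀
    rw [this]; exact hχC
  have hΦC : ContDiffAt ℝ 2 (fun x : EucSp n => φ (Real.sqrt (inner ℝ x x))) x₀ :=
    hχC'.comp x₀ hgC.contDiffAt
  refine ⟨hΦC, ?_⟩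
  have hφev : ∀ᶠ r in 𝓝 t₀, DifferentiableAt ℝ φ r := by
    filter_upwards [hφ.eventually (by simp)] with r hr
    exact hr.differentiableAt (by norm_num)
  have hsqrt_t : Tendsto Real.sqrt (𝓝 (t₀ ^ 2)) (𝓝 t₀) := by
    have := Real.continuous_sqrt.tendsto (t₀ ^ 2)
    rwa [hsq] at this
  have hpos : ∀ᶠ s in 𝓝 (t₀ ^ 2), 0 < s := eventually_gt_nhds hs₀pos
  have hχd : ∀ᶠ s in 𝓝 (t₀ ^ 2), HasDerivAt χ (g1 s) s := by
    filter_upwards [hpos, hsqrt_t.eventually hφev] with s hs hds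
    exact (hds.hasDerivAt).comp s (Real.hasDerivAt_sqrt hs.ne')
  have hd1C : ContDiffAt ℝ 1 (deriv φ) t₀ := by
    have h := (hφ.fderiv_right (m := 1) (by norm_num)).clm_apply
      (contDiffAt_const (c := (1:ℝ)))
    have heq : deriv φ = fun t => fderiv ℝ φ t 1 := funext fun t => (fderiv_apply_one_eq_deriv).symm
    rw [heq]; exact h
  have hd2d : HasDerivAt (deriv φ) d2 t₀ := (hd1C.differentiableAt one_ne_zero).hasDerivAt
  have ha : HasDerivAt (fun s => deriv φ (Real.sqrt s)) (d2 * (1 / (2 * t₀))) (t₀ ^ 2) := by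
    have h0 : HasDerivAt (deriv φ) d2 (Real.sqrt (t₀ ^ 2)) := by rw [hsq]; exact hd2d
    have h := h0.comp (t₀ ^ 2) (Real.hasDerivAt_sqrt hs₀pos.ne')
    rwa [hsq] at h
  have hb : HasDerivAt (fun s => 1 / (2 * Real.sqrt s))
      (-(2 * (1 / (2 * t₀))) / (2 * t₀) ^ 2) (t₀ ^ 2) := by
    have h1 : HasDerivAt (fun s => 2 * Real.sqrt s) (2 * (1 / (2 * t₀))) (t₀ ^ 2) := by
      have h := (Real.hasDerivAt_sqrt hs₀pos.ne').const_mul 2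
      rwa [hsq] at h
    have h2 : (2 * Real.sqrt (t₀ ^ 2)) ≠ 0 := by rw [hsq]; positivity
    have h3 := h1.inv h2
    simp only [one_div]
    refine h3.congr_deriv ?_
    rw [hsq]
    ring
  set γ₂ : ℝ := d2 * (1 / (2 * t₀)) * (1 / (2 * t₀)) + d1 * (-(2 * (1 / (2 * t₀))) / (2 * t₀) ^ 2)
    with hγ₂def
  have hg1d : HasDerivAt g1 γ₂ (t₀ ^ 2) := by
    have h := ha.mul hb
    have hv : deriv φ (Real.sqrt (t₀ ^ 2)) = d1 := by rw [hsq, hd1def]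
    have hv2 : (1 / (2 * Real.sqrt (t₀ ^ 2))) = 1 / (2 * t₀) := by rw [hsq]
    rw [hγ₂def]
    refine h.congr_deriv ?_
    rw [hv, hv2]
  have hΦd : ∀ᶠ x in 𝓝 x₀, HasFDerivAt (fun x : EucSp n => φ (Real.sqrt (inner ℝ x x)))
      (g1 (g x) • ((2:ℝ) • innerCLM n x)) x := by
    have hgt : Tendsto g (𝓝 x₀) (𝓝 (t₀ ^ 2)) := by
      have h := hgC.continuous.tendsto x₀
      have hgx₀ : g x₀ = t₀ ^ 2 := hs₀
      rwa [hgx₀] at h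
    filter_upwards [hgt.eventually hχd] with x hx
    exact hx.comp_hasFDerivAt x (inner_self_deriv x)
  have hfd : fderiv ℝ (fun x : EucSp n => φ (Real.sqrt (inner ℝ x x))) =ᶠ[𝓝 x₀]
      fun x => g1 (g x) • ((2:ℝ) • innerCLM n x) := by
    filter_upwards [hΦd] with x hx using hx.fderiv
  have hscal : HasFDerivAt (fun x => g1 (g x)) (γ₂ • ((2:ℝ) • innerCLM n x₀)) x₀ := by
    have h0 : HasDerivAt g1 γ₂ (g x₀) := by
      have : g x₀ = t₀ ^ 2 := hs₀
      rw [this]; exact hg1d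
    exact h0.comp_hasFDerivAt x₀ (inner_self_deriv x₀)
  have hLlin : HasFDerivAt (fun x : EucSp n => (2:ℝ) • innerCLM n x)
      ((2:ℝ) • (innerCLM n)) x₀ := by
    have h := ((2:ℝ) • (innerCLM n)).hasFDerivAt (x := x₀)
    convert h using 2
    rfl
  have hD := hscal.smul hLlin
  have h2nd : fderiv ℝ (fderiv ℝ (fun x : EucSp n => φ (Real.sqrt (inner ℝ x x)))) x₀ =
      g1 (g x₀) • ((2:ℝ) • (innerCLM n)) +
        (γ₂ • ((2:ℝ) • innerCLM n x₀)).smulRight ((2:ℝ) • innerCLM n x₀) := by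
    rw [hfd.fderiv_eq]
    exact hD.fderiv
  ext i j
  rw [hess_apply, h2nd]
  have hg1v : g1 (g x₀) = d1 / (2 * t₀) := by
    have h4 : g x₀ = t₀ ^ 2 := hs₀
    rw [h4, hg1def]
    simp only
    rw [hsq, hd1def]
    ring
  have hinner1 : (inner ℝ (EuclideanSpace.single i (1:ℝ)) (EuclideanSpace.single j (1:ℝ)) : ℝ)
      = if i = j then 1 else 0 := by
    rw [EuclideanSpace.inner_single_left]
    simp [EuclideanSpace.single_apply, eq_comm]
  have hinner2 : (inner ℝ x₀ (EuclideanSpace.single i (1:ℝ)) : ℝ) = t₀ * e i := by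
    rw [EuclideanSpace.inner_single_right, hx₀def]
    simp
  have hinner3 : (inner ℝ x₀ (EuclideanSpace.single j (1:ℝ)) : ℝ) = t₀ * e j := by
    rw [EuclideanSpace.inner_single_right, hx₀def]
    simp
  simp only [ContinuousLinearMap.add_apply, ContinuousLinearMap.smul_apply,
    ContinuousLinearMap.smulRight_apply, innerCLM_apply, smul_eq_mul,
    Matrix.add_apply, Matrix.smul_apply, Matrix.sub_apply, Matrix.one_apply, projMat,
    Matrix.of_apply]
  rw [hg1v, hinner1, hinner2, hinner3, hγ₂def]
  rcases eq_or_ne i j with rfl | hij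
  · simp only [if_pos rfl]
    field_simp
    ring
  · simp only [if_neg hij]
    field_simp
    ring

lemma inner_eq_dot {n : ℕ} (x y : EucSp n) :
    (inner ℝ x y : ℝ) = (fun i => x i) ⬝ᵥ (fun i => y i) := by
  simp [PiLp.inner_apply, dotProduct, RCLike.inner_apply, starRingEnd_apply, mul_comm]

lemma contDiffAt_deriv_one {g : ℝ → ℝ} {a : ℝ} (hg : ContDiffAt ℝ 2 g a) :
    ContDiffAt ℝ 1 (deriv g) a := by
  have h := (hg.fderiv_right (m := 1) (by norm_num)).clm_apply (contDiffAt_const (c := (1:ℝ)))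
  have heq : deriv g = fun t => fderiv ℝ g t 1 := funext fun t => (fderiv_apply_one_eq_deriv).symm
  rw [heq]; exact h

lemma isLocalMin_second_deriv {g : ℝ → ℝ} {a : ℝ} (hg : ContDiffAt ℝ 2 g a)
    (hmin : IsLocalMin g a) : deriv g a = 0 ∧ 0 ≤ deriv (deriv g) a := by
  have hdiff : ∀ᶠ t in 𝓝 a, DifferentiableAt ℝ g t := by
    filter_upwards [hg.eventually (by simp)] with t ht
    exact ht.differentiableAt (by norm_num)
  have hL : HasDerivAt (deriv g) (deriv (deriv g) a) a :=
    ((contDiffAt_deriv_one hg).differentiableAt one_ne_zero).hasDerivAt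
  exact ⟨hmin.deriv_eq_zero, isLocalMin_deriv2_nonneg hdiff hL hmin⟩

/-- Radial subharmonics: `u(x) = ψ(|x|)` is `F`-subharmonic on the annulus
`{x : |x| ∈ I}` if and only if `ψ` is `R_F`-subharmonic on `I`. -/
theorem stmt1 (n : ℕ) (hn : 1 ≤ n)
    (F : Set (Matrix (Fin n) (Fin n) ℝ)) (hF : IsSubequation F)
    (I : Set ℝ) (hIopen : IsOpen I) (hIsub : I ⊆ Set.Ioi (0 : ℝ))
    (hIconn : I.OrdConnected) (ψ : ℝ → EReal) :
    IsFSubharmonicOn F {x : EucSp n | ‖x‖ ∈ I} (fun x => ψ ‖x‖) ↔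
      IsRadialSubharmonicOn F I ψ := by
  obtain ⟨hFsymm, hFclosed, hFpos⟩ := hF
  constructor
  · rintro ⟨husc, hlt, htest⟩
    obtain ⟨e₀, he₀⟩ : ∃ e₀ : EucSp n, ‖e₀‖ = 1 :=
      ⟨EuclideanSpace.single ⟨0, hn⟩ (1:ℝ), by simp⟩
    have hnorm_mem : ∀ t ∈ I, ‖t • e₀‖ = t := by
      intro t ht
      rw [norm_smul, he₀, mul_one, Real.norm_eq_abs, abs_of_pos (hIsub ht)]
    refine ⟨?_, ?_, ?_⟩
    · intro t ht
      have hAnn : (t • e₀) ∈ {x : EucSp n | ‖x‖ ∈ I} := by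
        rw [mem_setOf_eq, hnorm_mem t ht]; exact ht
      have htd : Tendsto (fun s : ℝ => s • e₀) (𝓝[I] t)
          (𝓝[{x : EucSp n | ‖x‖ ∈ I}] (t • e₀)) := by
        refine ContinuousWithinAt.tendsto_nhdsWithin ?_ ?_
        · exact (continuous_id.smul continuous_const).continuousWithinAt
        · intro s hs
          rw [mem_setOf_eq, hnorm_mem s hs]; exact hs
      have h1 : UpperSemicontinuousWithinAt (fun s : ℝ => ψ ‖s • e₀‖) I t :=
        usc_comp_tendsto (f := fun x : EucSp n => ψ ‖x‖) (g := fun s : ℝ => s • e₀)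
          (husc _ hAnn) htd
      intro y hy
      have hy' : ψ ‖t • e₀‖ < y := by rw [hnorm_mem t ht]; exact hy
      filter_upwards [h1 y hy', eventually_mem_nhdsWithin] with s hs hsI
      rwa [hnorm_mem s hsI] at hs
    · intro t ht
      have hAnn : (t • e₀) ∈ {x : EucSp n | ‖x‖ ∈ I} := by
        rw [mem_setOf_eq, hnorm_mem t ht]; exact ht
      have h2 : ψ ‖t • e₀‖ < ⊤ := hlt _ hAnn
      rwa [hnorm_mem t ht] at h2
    · intro t₀ ht₀ φ hφC hφle hφeq
      intro e he
      have ht₀pos : 0 < t₀ := hIsub ht₀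
      obtain ⟨hΦC, hHess⟩ := radial_test ht₀pos hφC e he
      have hx₀n : ‖t₀ • e‖ = t₀ := by
        rw [norm_smul, he, mul_one, Real.norm_eq_abs, abs_of_pos ht₀pos]
      have hx₀Ann : (t₀ • e) ∈ {x : EucSp n | ‖x‖ ∈ I} := by
        rw [mem_setOf_eq, hx₀n]; exact ht₀
      have hsqrtnorm : ∀ x : EucSp n, Real.sqrt (inner ℝ x x : ℝ) = ‖x‖ := fun x => by
        rw [real_inner_self_eq_norm_sq, Real.sqrt_sq (norm_nonneg x)]
      have h := htest (t₀ • e) hx₀Ann (fun x => φ (Real.sqrt (inner ℝ x x))) hΦC ?_ ?_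
      · rw [hHess] at h
        exact h
      · have hnt : Tendsto (fun x : EucSp n => ‖x‖)
            (𝓝[{x : EucSp n | ‖x‖ ∈ I}] (t₀ • e)) (𝓝[I] t₀) := by
          have h2 := ContinuousWithinAt.tendsto_nhdsWithin
            (continuous_norm.continuousWithinAt
              (s := {x : EucSp n | ‖x‖ ∈ I}) (x := t₀ • e))
            (fun x hx => hx)
          rwa [hx₀n] at h2
        filter_upwards [hnt.eventually hφle] with x hx
        rwa [hsqrtnorm x]
      · show ψ ‖t₀ • e‖ = ((φ (Real.sqrt (inner ℝ (t₀ • e) (t₀ • e) : ℝ)) : ℝ) : EReal)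
        rw [hsqrtnorm, hx₀n]
        exact hφeq
  · rintro ⟨husc, hlt, htest⟩
    refine ⟨?_, ?_, ?_⟩
    · intro x hx
      exact usc_comp_tendsto (husc _ hx)
        (ContinuousWithinAt.tendsto_nhdsWithin continuous_norm.continuousWithinAt
          (fun y hy => hy))
    · intro x hx
      exact hlt _ hx
    · intro x₀ hx₀ Φ hΦC hΦle hΦeq
      set t₀ : ℝ := ‖x₀‖ with ht₀def
      have ht₀I : t₀ ∈ I := hx₀
      have ht₀pos : 0 < t₀ := hIsub ht₀I
      set e : EucSp n := t₀⁻¹ • x₀ with hedef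
      have hx₀e : t₀ • e = x₀ := by
        rw [hedef, smul_smul, mul_inv_cancel₀ ht₀pos.ne', one_smul]
      have he : ‖e‖ = 1 := by
        rw [hedef, norm_smul, Real.norm_eq_abs, abs_of_pos (inv_pos.2 ht₀pos), ← ht₀def,
          inv_mul_cancel₀ ht₀pos.ne']
      have hψt₀ : ψ t₀ = ((Φ x₀ : ℝ) : EReal) := hΦeq
      clear_value t₀ e
      have hMsymm : (hess Φ x₀)ᵀ = hess Φ x₀ := hess_symm hΦC
      have hBdot : ∀ v w : EucSp n, fderiv ℝ (fderiv ℝ Φ) x₀ v w =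
          (fun i => v i) ⬝ᵥ (hess Φ x₀ *ᵥ (fun i => w i)) := by
        intro v w
        rw [bilin_expand]
        simp only [dotProduct, Matrix.mulVec, Finset.mul_sum]
        refine Finset.sum_congr rfl fun i _ => Finset.sum_congr rfl fun j _ => ?_
        rw [hess_apply Φ x₀ i j]
        ring
      have hparam : ∀ w : EucSp n, (inner ℝ e w : ℝ) = 0 → ∃ a : ℝ, ∃ f : EucSp n,
          (t₀ * a) • f = w ∧ (a = 0 ∨ (‖f‖ = 1 ∧ (inner ℝ e f : ℝ) = 0)) ∧
          a * a * t₀ = ‖w‖ ^ 2 / t₀ ∧ (a ≠ 0 → f = ‖w‖⁻¹ • w) := by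
        intro w hw
        rcases eq_or_ne w 0 with rfl | hw0
        · exact ⟨0, e, by simp, Or.inl rfl, by simp, by simp⟩
        · refine ⟨‖w‖ / t₀, ‖w‖⁻¹ • w, ?_, Or.inr ⟨?_, ?_⟩, ?_, fun _ => rfl⟩
          · rw [smul_smul]
            have hc : t₀ * (‖w‖ / t₀) * ‖w‖⁻¹ = 1 := by
              field_simp
            rw [hc, one_smul]
          · rw [norm_smul, norm_inv, norm_norm,
              inv_mul_cancel₀ (norm_ne_zero_iff.2 hw0)]
          · rw [real_inner_smul_right, hw, mul_zero]
          · field_simp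
      have hcond : ∀ w : EucSp n, (inner ℝ e w : ℝ) = 0 →
          fderiv ℝ Φ x₀ w = 0 ∧
          (fderiv ℝ Φ x₀ e / t₀) * ‖w‖ ^ 2 ≤ fderiv ℝ (fderiv ℝ Φ) x₀ w w := by
        intro w hw
        obtain ⟨a, f, haf, hcase, haa, _⟩ := hparam w hw
        have hz0 : zγ e f a t₀ 0 = x₀ := by rw [zγ_0, hx₀e]
        have hztend : Tendsto (zγ e f a t₀) (𝓝 0) (𝓝[{x : EucSp n | ‖x‖ ∈ I}] x₀) := by
          refine tendsto_nhdsWithin_of_tendsto_nhds_of_eventually_within _ ?_ ?_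
          · have hct := (hasDerivAt_zγ e f a t₀ 0).continuousAt
            rw [ContinuousAt, hz0] at hct
            exact hct
          · refine Eventually.of_forall fun s => ?_
            rw [mem_setOf_eq, zγ_norm e f a t₀ he hcase ht₀pos.le]
            exact ht₀I
        have hmin : IsLocalMin (fun s => Φ (zγ e f a t₀ s)) 0 := by
          filter_upwards [hztend.eventually hΦle] with s hs
          have hns : ‖zγ e f a t₀ s‖ = t₀ := zγ_norm e f a t₀ he hcase ht₀pos.le s
          rw [hns, hψt₀] at hs
          have h3 := EReal.coe_le_coe_iff.1 hs
          simpa [hz0] using h3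
        obtain ⟨hGC, hG1, hG2⟩ := comp_curve_derivs hΦC (hasDerivAt_zγ e f a t₀)
          (hasDerivAt_zγ' e f a t₀) hz0 (contDiff_zγ e f a t₀).contDiffAt
        obtain ⟨hd0, hd2⟩ := isLocalMin_second_deriv hGC hmin
        have hz'0 : zγ' e f a t₀ 0 = w := by rw [zγ'_0, haf]
        rw [hG1, hz'0] at hd0
        rw [hG2, hz'0] at hd2
        refine ⟨hd0, ?_⟩
        have hps : fderiv ℝ Φ x₀ ((-(a * a) * t₀) • e) = (-(a * a) * t₀) * fderiv ℝ Φ x₀ e := by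
          rw [_root_.map_smul, smul_eq_mul]
        rw [hps] at hd2
        have hrr : -(a * a) * t₀ = -(‖w‖ ^ 2 / t₀) := by rw [neg_mul, haa]
        rw [hrr] at hd2
        have heq2 : fderiv ℝ Φ x₀ e / t₀ * ‖w‖ ^ 2 = ‖w‖ ^ 2 / t₀ * fderiv ℝ Φ x₀ e := by
          ring
        linarith
      have htestv : ∀ v : EucSp n, (inner ℝ e v : ℝ) = 0 →
          ((fderiv ℝ Φ x₀ e / t₀) • ((1 : Matrix (Fin n) (Fin n) ℝ) - projMat e) +
            (fderiv ℝ (fderiv ℝ Φ) x₀ (e + v) (e + v)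
              - ‖v‖ ^ 2 / t₀ * fderiv ℝ Φ x₀ e) • projMat e) ∈ F := by
        intro v hv
        obtain ⟨a, f, haf, hcase, haa, hfv⟩ := hparam v hv
        have hx0 : xγ e f a t₀ t₀ = x₀ := by rw [xγ_t₀, hx₀e]
        obtain ⟨hφcC, hc1, hc2⟩ := comp_curve_derivs hΦC (hasDerivAt_xγ e f a t₀)
          (hasDerivAt_xγ' e f a t₀) hx0 (contDiff_xγ e f a t₀).contDiffAt
        have hpv : fderiv ℝ Φ x₀ v = 0 := (hcond v hv).1
        have hpaf : fderiv ℝ Φ x₀ ((t₀ * a) • f) = 0 := by rw [haf]; exact hpv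
        have hpf : (2 * a) * fderiv ℝ Φ x₀ f = 0 := by
          rcases eq_or_ne a 0 with ha0 | ha0
          · rw [ha0]; ring
          · have h5 : (t₀ * a) * fderiv ℝ Φ x₀ f = 0 := by
              rw [← smul_eq_mul, ← _root_.map_smul]; exact hpaf
            have h6 : fderiv ℝ Φ x₀ f = 0 := by
              rcases mul_eq_zero.1 h5 with h | h
              · exact absurd h (mul_ne_zero ht₀pos.ne' ha0)
              · exact h
            rw [h6, mul_zero]
        have hderiv1 : deriv (fun t => Φ (xγ e f a t₀ t)) t₀ = fderiv ℝ Φ x₀ e := by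
          rw [hc1, xγ'_t₀, map_add, hpaf, add_zero]
        have hderiv2 : deriv (deriv (fun t => Φ (xγ e f a t₀ t))) t₀ =
            fderiv ℝ (fderiv ℝ Φ) x₀ (e + v) (e + v) - ‖v‖ ^ 2 / t₀ * fderiv ℝ Φ x₀ e := by
          rw [hc2, xγ'_t₀, haf]
          have hp2 : fderiv ℝ Φ x₀ ((2 * a) • f + (-(a * a) * t₀) • e)
              = -(‖v‖ ^ 2 / t₀) * fderiv ℝ Φ x₀ e := by
            rw [map_add, _root_.map_smul, _root_.map_smul, smul_eq_mul, smul_eq_mul, hpf,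
              zero_add, neg_mul, haa]
          rw [hp2]
          ring
        have hmemI : ∀ᶠ t in 𝓝[I] t₀, ψ t ≤ ((Φ (xγ e f a t₀ t) : ℝ) : EReal) := by
          have hxt : Tendsto (xγ e f a t₀) (𝓝[I] t₀) (𝓝[{x : EucSp n | ‖x‖ ∈ I}] x₀) := by
            refine tendsto_nhdsWithin_of_tendsto_nhds_of_eventually_within _ ?_ ?_
            · have hct := (hasDerivAt_xγ e f a t₀ t₀).continuousAt
              rw [ContinuousAt, hx0] at hct
              exact hct.mono_left nhdsWithin_le_nhds
            · filter_upwards [eventually_mem_nhdsWithin] with t ht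
              show ‖xγ e f a t₀ t‖ ∈ I
              rw [xγ_norm e f a t₀ he hcase (le_of_lt (hIsub ht))]
              exact ht
          filter_upwards [hxt.eventually hΦle, eventually_mem_nhdsWithin] with t h7 htI
          have h7' : ψ ‖xγ e f a t₀ t‖ ≤ ((Φ (xγ e f a t₀ t) : ℝ) : EReal) := h7
          rwa [xγ_norm e f a t₀ he hcase (le_of_lt (hIsub htI))] at h7'
        have heqt : ψ t₀ = ((Φ (xγ e f a t₀ t₀) : ℝ) : EReal) := by rw [hx0]; exact hψt₀
        have hmem := htest t₀ ht₀I _ hφcC hmemI heqt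
        have h8 := hmem e he
        rw [hderiv1, hderiv2] at h8
        exact h8
      -- dot-product form of the data
      have hedot : (fun i => e i) ⬝ᵥ (fun i => e i) = (1:ℝ) := by
        have h9 := real_inner_self_eq_norm_sq e
        rw [he] at h9
        rw [← inner_eq_dot]
        simpa using h9
      have hSdot : ∀ w : Fin n → ℝ, w ⬝ᵥ (fun i => e i) = 0 →
          (fderiv ℝ Φ x₀ e / t₀) * (w ⬝ᵥ w) ≤ w ⬝ᵥ (hess Φ x₀ *ᵥ w) := by
        intro w hw
        set w' : EucSp n := (WithLp.equiv 2 (∀ _ : Fin n, ℝ)).symm w with hw'def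
        have hcoe : (fun i => w' i) = w := rfl
        have hinner : (inner ℝ e w' : ℝ) = 0 := by
          rw [inner_eq_dot, hcoe, dotProduct_comm]
          exact hw
        have h10 := (hcond w' hinner).2
        have hnw : ‖w'‖ ^ 2 = w ⬝ᵥ w := by
          rw [← real_inner_self_eq_norm_sq, inner_eq_dot, hcoe]
        have hB10 := hBdot w' w'
        rw [hcoe] at hB10
        rw [hnw, hB10] at h10
        exact h10
      have hMε : ∀ ε : ℝ, 0 < ε →
          hess Φ x₀ + ε • ((1 : Matrix (Fin n) (Fin n) ℝ) - projMat e) ∈ F := by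
        intro ε hε
        obtain ⟨v, hve, hPSD⟩ := KeyMat.key_matrix (fun i => e i) hedot (hess Φ x₀) hMsymm
          (fderiv ℝ Φ x₀ e / t₀) ε hε hSdot
        set v' : EucSp n := (WithLp.equiv 2 (∀ _ : Fin n, ℝ)).symm v with hv'def
        have hcoe : (fun i => v' i) = v := rfl
        have hinner : (inner ℝ e v' : ℝ) = 0 := by
          rw [inner_eq_dot, hcoe, dotProduct_comm]
          exact hve
        have hBB := htestv v' hinner
        have hq : fderiv ℝ (fderiv ℝ Φ) x₀ (e + v') (e + v')
            - ‖v'‖ ^ 2 / t₀ * fderiv ℝ Φ x₀ e =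
            ((fun i => e i) + v) ⬝ᵥ (hess Φ x₀ *ᵥ ((fun i => e i) + v))
              - (fderiv ℝ Φ x₀ e / t₀) * (v ⬝ᵥ v) := by
          have h11 := hBdot (e + v') (e + v')
          have hcoe2 : (fun i => (e + v') i) = (fun i => e i) + v := rfl
          rw [h11, hcoe2]
          have hnv : ‖v'‖ ^ 2 = v ⬝ᵥ v := by
            rw [← real_inner_self_eq_norm_sq, inner_eq_dot, hcoe]
          rw [hnv]
          ring
        rw [hq] at hBB
        have hproj : Matrix.vecMulVec (fun i => e i) (fun i => e i) = projMat e := rfl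
        rw [hproj] at hPSD
        have hfin := hFpos _ hBB _ hPSD
        refine Set.mem_of_eq_of_mem ?_ hfin
        abel
      have hseq : Tendsto (fun k : ℕ => hess Φ x₀ +
          (1 / (k + 1 : ℝ)) • ((1 : Matrix (Fin n) (Fin n) ℝ) - projMat e)) atTop
          (𝓝 (hess Φ x₀)) := by
        have h0 : Tendsto (fun k : ℕ => (1 / (k + 1 : ℝ))) atTop (𝓝 0) :=
          tendsto_one_div_add_atTop_nhds_zero_nat
        have h1 := h0.smul_const ((1 : Matrix (Fin n) (Fin n) ℝ) - projMat e)
        rw [zero_smul] at h1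
        have h2 := (tendsto_const_nhds (x := hess Φ x₀) (f := atTop (α := ℕ))).add h1
        simpa using h2
      exact hFclosed.mem_of_tendsto hseq (Eventually.of_forall fun k => hMε _ (by positivity))

end
end

section
/- Let F ⊆ Sym²(ℝⁿ) be an ST-invariant cone subequation with finite Riesz characteristic p. Then for every t > 0, every λ ≥ 0, every a ∈ ℝ, and every unit vector e ∈ ℝⁿ: (λ/t)·P_{e⊥} + a·P_e ∈ F if and only if a + ((p−1)/t)·λ ≥ 0. (Equivalently, the increasing radial subequation R_F ∩ {λ ≥ 0} of F coincides with R_p^↑ = {(λ, a) : a + ((p−1)/t)·λ ≥ 0 and λ ≥ 0}.) -/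
open Set Filter Topology Matrix

noncomputable section

/-- A cone subequation. -/
def IsConeSubequation {n : ℕ} (F : Set (Matrix (Fin n) (Fin n) ℝ)) : Prop :=
  IsSubequation F ∧ ∀ A ∈ F, ∀ t : ℝ, 0 ≤ t → t • A ∈ F

/-- `F` is invariant under a closed subgroup of `O(n)` acting transitively on the
unit sphere. -/
def STInvariant {n : ℕ} (F : Set (Matrix (Fin n) (Fin n) ℝ)) : Prop :=
  ∃ G : Set (Matrix (Fin n) (Fin n) ℝ),
    IsClosed G ∧
    G ⊆ (Matrix.orthogonalGroup (Fin n) ℝ : Set (Matrix (Fin n) (Fin n) ℝ)) ∧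
    (1 : Matrix (Fin n) (Fin n) ℝ) ∈ G ∧
    (∀ g ∈ G, ∀ h ∈ G, g * h ∈ G) ∧
    (∀ g ∈ G, g⁻¹ ∈ G) ∧
    (∀ x y : EucSp n, ‖x‖ = 1 → ‖y‖ = 1 → ∃ g ∈ G, Matrix.toEuclideanLin g x = y) ∧
    (∀ g ∈ G, ∀ A ∈ F, gᵀ * A * g ∈ F)

/-- The interior of `F` relative to the subspace `Sym²(ℝⁿ)` of symmetric matrices. -/
def symInterior {n : ℕ} (F : Set (Matrix (Fin n) (Fin n) ℝ)) :
    Set (Matrix (Fin n) (Fin n) ℝ) :=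
  {A | ∃ U ∈ 𝓝 A, ∀ B ∈ U, B.IsSymm → B ∈ F}

/-- The frontier of `F` relative to the subspace `Sym²(ℝⁿ)` of symmetric matrices. -/
def symFrontier {n : ℕ} (F : Set (Matrix (Fin n) (Fin n) ℝ)) :
    Set (Matrix (Fin n) (Fin n) ℝ) :=
  closure F \ symInterior F

/-- `F` has finite (increasing) Riesz characteristic `p`:
`P_{e⊥} − (p−1) P_e ∈ ∂F` for every unit vector `e`. -/
def HasRieszChar {n : ℕ} (F : Set (Matrix (Fin n) (Fin n) ℝ)) (p : ℝ) : Prop :=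
  1 ≤ p ∧ ∀ e : EucSp n, ‖e‖ = 1 →
    ((1 : Matrix (Fin n) (Fin n) ℝ) - projMat e) - (p - 1) • projMat e ∈ symFrontier F

/-- `F` has finite decreasing Riesz characteristic `q`:
`−P_{e⊥} + (q−1) P_e ∈ ∂F` for every unit vector `e`. -/
def HasDualRieszChar {n : ℕ} (F : Set (Matrix (Fin n) (Fin n) ℝ)) (q : ℝ) : Prop :=
  1 ≤ q ∧ ∀ e : EucSp n, ‖e‖ = 1 →
    -((1 : Matrix (Fin n) (Fin n) ℝ) - projMat e) + (q - 1) • projMat e ∈ symFrontier F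

/-- The dual subequation `F̃ = {A : −A ∉ Int F}` (interior relative to `Sym²(ℝⁿ)`). -/
def dualSubeq {n : ℕ} (F : Set (Matrix (Fin n) (Fin n) ℝ)) :
    Set (Matrix (Fin n) (Fin n) ℝ) :=
  {A | A.IsSymm ∧ -A ∉ symInterior F}

/-- `u` is `F`-harmonic on `X`: `u` is `F`-subharmonic and `−u` is `F̃`-subharmonic. -/
def IsFHarmonicOn {n : ℕ} (F : Set (Matrix (Fin n) (Fin n) ℝ))
    (X : Set (EucSp n)) (u : EucSp n → ℝ) : Prop :=
  IsFSubharmonicOn F X (fun x => ((u x : ℝ) : EReal)) ∧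
  IsFSubharmonicOn (dualSubeq F) X (fun x => ((-(u x) : ℝ) : EReal))

/-- The Riesz kernel `K_p`. -/
def rieszKernel (p t : ℝ) : ℝ :=
  if p < 2 then t ^ (2 - p) else if p = 2 then Real.log t else -(t ^ (2 - p))

namespace StmtAux
variable {n : ℕ}

lemma sum_sq_eq_one {e : EucSp n} (he : ‖e‖ = 1) : ∑ i, e i ^ 2 = 1 := by
  have h := EuclideanSpace.norm_eq e
  rw [he] at h
  have h2 : Real.sqrt (∑ i, ‖e i‖ ^ 2) = 1 := h.symm
  rw [Real.sqrt_eq_one] at h2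
  simpa [Real.norm_eq_abs, sq_abs] using h2

lemma form_add (A B : Matrix (Fin n) (Fin n) ℝ) (x : Fin n → ℝ) :
    x ⬝ᵥ ((A + B) *ᵥ x) = x ⬝ᵥ (A *ᵥ x) + x ⬝ᵥ (B *ᵥ x) := by
  simp [Matrix.add_mulVec, dotProduct_add]

lemma form_smul (c : ℝ) (A : Matrix (Fin n) (Fin n) ℝ) (x : Fin n → ℝ) :
    x ⬝ᵥ ((c • A) *ᵥ x) = c * (x ⬝ᵥ (A *ᵥ x)) := by
  simp [Matrix.smul_mulVec, dotProduct_smul, smul_eq_mul]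

lemma form_one (x : Fin n → ℝ) :
    x ⬝ᵥ ((1 : Matrix (Fin n) (Fin n) ℝ) *ᵥ x) = ∑ i, x i ^ 2 := by
  simp [Matrix.one_mulVec, dotProduct, sq]

lemma form_proj (e : EucSp n) (x : Fin n → ℝ) :
    x ⬝ᵥ (projMat e *ᵥ x) = (∑ i, e i * x i) ^ 2 := by
  rw [sq, Finset.sum_mul_sum]
  simp only [Matrix.mulVec, dotProduct, projMat, Matrix.of_apply, Finset.mul_sum]
  refine Finset.sum_congr rfl fun i _ => Finset.sum_congr rfl fun j _ => by ring

lemma cs_proj {e : EucSp n} (he : ‖e‖ = 1) (x : Fin n → ℝ) :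
    (∑ i, e i * x i) ^ 2 ≤ ∑ i, x i ^ 2 := by
  have := Finset.sum_mul_sq_le_sq_mul_sq Finset.univ (fun i => e i) x
  rwa [sum_sq_eq_one he, one_mul] at this

lemma isHermitian_of_entries (C : Matrix (Fin n) (Fin n) ℝ)
    (h : ∀ i j, C i j = C j i) : C.IsHermitian := by
  ext i j
  simp only [Matrix.conjTranspose_apply, star_trivial]
  exact h j i

lemma combo_form_ge {e : EucSp n} (he : ‖e‖ = 1) (α β : ℝ) (x : Fin n → ℝ) :
    min α (α + β) * (∑ i, x i ^ 2) ≤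
      x ⬝ᵥ ((α • (1 : Matrix (Fin n) (Fin n) ℝ) + β • projMat e) *ᵥ x) := by
  have hS : (0:ℝ) ≤ ∑ i, x i ^ 2 := Finset.sum_nonneg fun i _ => sq_nonneg _
  have hT := cs_proj he x
  rw [form_add, form_smul, form_smul, form_one, form_proj]
  rcases le_or_gt 0 β with hβ | hβ
  · calc min α (α + β) * (∑ i, x i ^ 2) ≤ α * ∑ i, x i ^ 2 :=
        mul_le_mul_of_nonneg_right (min_le_left _ _) hS
      _ ≤ α * (∑ i, x i ^ 2) + β * (∑ i, e i * x i) ^ 2 :=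
        le_add_of_nonneg_right (mul_nonneg hβ (sq_nonneg _))
  · calc min α (α + β) * (∑ i, x i ^ 2) ≤ (α + β) * ∑ i, x i ^ 2 :=
        mul_le_mul_of_nonneg_right (min_le_right _ _) hS
      _ = α * (∑ i, x i ^ 2) + β * (∑ i, x i ^ 2) := by ring
      _ ≤ α * (∑ i, x i ^ 2) + β * (∑ i, e i * x i) ^ 2 := by
          have := mul_le_mul_of_nonpos_left hT hβ.le
          linarith

lemma psd_combo {e : EucSp n} (he : ‖e‖ = 1) {α β : ℝ} (hα : 0 ≤ α) (hαβ : 0 ≤ α + β) :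
    (α • (1 : Matrix (Fin n) (Fin n) ℝ) + β • projMat e).PosSemidef := by
  rw [Matrix.posSemidef_iff_dotProduct_mulVec]
  constructor
  · refine isHermitian_of_entries _ fun i j => ?_
    simp only [Matrix.add_apply, Matrix.smul_apply, Matrix.one_apply, projMat,
      Matrix.of_apply, smul_eq_mul]
    rcases eq_or_ne i j with h | h
    · subst h; ring
    · rw [if_neg h, if_neg (Ne.symm h)]; ring
  · intro x
    have hx : star x = x := by funext i; exact star_trivial _
    rw [hx]
    have hS : (0:ℝ) ≤ ∑ i, x i ^ 2 := Finset.sum_nonneg fun i _ => sq_nonneg _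
    have := combo_form_ge he α β x
    have hm : 0 ≤ min α (α + β) := le_min hα hαβ
    nlinarith [mul_nonneg hm hS]

lemma form_lower (C : Matrix (Fin n) (Fin n) ℝ) (ε : ℝ) (hε : 0 ≤ ε)
    (hC : ∀ i j, |C i j| ≤ ε) (x : Fin n → ℝ) :
    -(ε * n * ∑ i, x i ^ 2) ≤ x ⬝ᵥ (C *ᵥ x) := by
  have habs : |x ⬝ᵥ (C *ᵥ x)| ≤ ε * (∑ i, |x i|) ^ 2 := by
    have h1 : |x ⬝ᵥ (C *ᵥ x)| ≤ ∑ i, ∑ j, |x i| * ε * |x j| := by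
      calc |x ⬝ᵥ (C *ᵥ x)| = |∑ i, ∑ j, x i * (C i j * x j)| := by
            simp [Matrix.mulVec, dotProduct, Finset.mul_sum]
        _ ≤ ∑ i, |∑ j, x i * (C i j * x j)| := Finset.abs_sum_le_sum_abs _ _
        _ ≤ ∑ i, ∑ j, |x i * (C i j * x j)| :=
            Finset.sum_le_sum fun i _ => Finset.abs_sum_le_sum_abs _ _
        _ ≤ ∑ i, ∑ j, |x i| * ε * |x j| := by
            refine Finset.sum_le_sum fun i _ => Finset.sum_le_sum fun j _ => ?_
            rw [abs_mul, abs_mul]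
            have h0 : (0:ℝ) ≤ |x i| := abs_nonneg _
            have h0' : (0:ℝ) ≤ |x j| := abs_nonneg _
            calc |x i| * (|C i j| * |x j|)
                ≤ |x i| * (ε * |x j|) :=
                  mul_le_mul_of_nonneg_left
                    (mul_le_mul_of_nonneg_right (hC i j) h0') h0
              _ = |x i| * ε * |x j| := by ring
    calc |x ⬝ᵥ (C *ᵥ x)| ≤ ∑ i, ∑ j, |x i| * ε * |x j| := h1
      _ = ε * (∑ i, |x i|) ^ 2 := by
          rw [sq, Finset.sum_mul_sum, Finset.mul_sum]
          refine Finset.sum_congr rfl fun i _ => ?_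
          rw [Finset.mul_sum]
          exact Finset.sum_congr rfl fun j _ => by ring
  have hsq : (∑ i, |x i|) ^ 2 ≤ n * ∑ i, x i ^ 2 := by
    have := sq_sum_le_card_mul_sum_sq (s := (Finset.univ : Finset (Fin n)))
      (f := fun i => |x i|)
    simpa [sq_abs] using this
  have := neg_abs_le (x ⬝ᵥ (C *ᵥ x))
  have h2 : |x ⬝ᵥ (C *ᵥ x)| ≤ ε * (n * ∑ i, x i ^ 2) :=
    habs.trans (mul_le_mul_of_nonneg_left hsq hε)
  nlinarith


lemma ball_open (Be : Matrix (Fin n) (Fin n) ℝ) (ε : ℝ) :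
    IsOpen {B : Matrix (Fin n) (Fin n) ℝ | ∀ i j, |B i j - Be i j| < ε} := by
  have : {B : Matrix (Fin n) (Fin n) ℝ | ∀ i j, |B i j - Be i j| < ε} =
      ⋂ i, ⋂ j, (fun B : Matrix (Fin n) (Fin n) ℝ => B i j) ⁻¹' (Metric.ball (Be i j) ε) := by
    ext B; simp [Metric.mem_ball, Real.dist_eq]
  rw [this]
  exact isOpen_iInter_of_finite fun i => isOpen_iInter_of_finite fun j =>
    Metric.isOpen_ball.preimage ((continuous_apply j).comp (continuous_apply i))

lemma key {F : Set (Matrix (Fin n) (Fin n) ℝ)} (hF : IsConeSubequation F) {p : ℝ}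
    (hp : 1 ≤ p) {e : EucSp n} (he : ‖e‖ = 1) {μ a : ℝ} (hμ : 0 < μ)
    (hc : a + (p - 1) * μ < 0)
    (hA : μ • ((1 : Matrix (Fin n) (Fin n) ℝ) - projMat e) + a • projMat e ∈ F) :
    ((1 : Matrix (Fin n) (Fin n) ℝ) - projMat e) - (p - 1) • projMat e ∈ symInterior F := by
  set Be : Matrix (Fin n) (Fin n) ℝ :=
    ((1 : Matrix (Fin n) (Fin n) ℝ) - projMat e) - (p - 1) • projMat e with hBe
  set p' : ℝ := 1 - a / μ with hp'
  have hdiv : a / μ < 1 - p := by rw [div_lt_iff₀ hμ]; nlinarith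
  have hpp' : p < p' := by simp only [hp']; linarith
  have hp'1 : 0 < p' - 1 := by linarith
  set s : ℝ := ((p - 1) / (p' - 1) + 1) / 2 with hs
  have hratio0 : 0 ≤ (p - 1) / (p' - 1) := div_nonneg (by linarith) hp'1.le
  have hratio1 : (p - 1) / (p' - 1) < 1 := (div_lt_one hp'1).mpr (by linarith)
  have hs0 : 0 ≤ s := by simp only [hs]; linarith
  have hs1 : s < 1 := by simp only [hs]; linarith
  have hslt : (p - 1) / (p' - 1) < s := by simp only [hs]; linarith
  have hsg : p - 1 < s * (p' - 1) := by
    have h := div_mul_cancel₀ (p - 1) hp'1.ne'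
    have h2 := mul_lt_mul_of_pos_right hslt hp'1
    rw [h] at h2
    exact h2
  set A' : Matrix (Fin n) (Fin n) ℝ :=
    (s / μ) • (μ • ((1 : Matrix (Fin n) (Fin n) ℝ) - projMat e) + a • projMat e) with hA'
  have hA'F : A' ∈ F := hF.2 _ hA (s / μ) (div_nonneg hs0 hμ.le)
  set D : Matrix (Fin n) (Fin n) ℝ :=
    (1 - s) • (1 : Matrix (Fin n) (Fin n) ℝ) + (s * p' - p) • projMat e with hD
  have hsum : A' + D = Be := by
    ext i j
    rcases eq_or_ne i j with h | h
    · subst h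
      simp only [hA', hD, hBe, hp', Matrix.add_apply, Matrix.sub_apply, Matrix.smul_apply,
        Matrix.one_apply_eq, projMat, Matrix.of_apply, smul_eq_mul]
      field_simp
      ring
    · simp only [hA', hD, hBe, hp', Matrix.add_apply, Matrix.sub_apply, Matrix.smul_apply,
        Matrix.one_apply_ne h, projMat, Matrix.of_apply, smul_eq_mul]
      field_simp
      ring
  set m : ℝ := min (1 - s) ((1 - s) + (s * p' - p)) with hm
  have hmpos : 0 < m := by
    refine lt_min (by linarith) ?_
    nlinarith
  set ε : ℝ := m / (2 * (n + 1)) with hε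
  have hεpos : 0 < ε := div_pos hmpos (by positivity)
  refine ⟨{B : Matrix (Fin n) (Fin n) ℝ | ∀ i j, |B i j - Be i j| < ε},
    (ball_open Be ε).mem_nhds ?_, ?_⟩
  · intro i j; simpa using hεpos
  · intro B hBU hBsymm
    have hpsd : (B - A').PosSemidef := by
      rw [Matrix.posSemidef_iff_dotProduct_mulVec]
      constructor
      · refine isHermitian_of_entries _ fun i j => ?_
        have hB : B j i = B i j := by
          have := congrFun (congrFun hBsymm i) j
          simpa [Matrix.transpose_apply] using this
        have hA'' : A' i j = A' j i := by
          rcases eq_or_ne i j with h | h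
          · subst h; rfl
          · simp only [hA', Matrix.add_apply, Matrix.smul_apply, Matrix.sub_apply,
              Matrix.one_apply_ne h, Matrix.one_apply_ne (Ne.symm h), projMat,
              Matrix.of_apply, smul_eq_mul]
            ring
        simp only [Matrix.sub_apply]
        rw [hB, hA'']
      · intro x
        have hx : star x = x := by funext i; exact star_trivial _
        rw [hx]
        have hdecomp : B - A' = (B - Be) + D := by rw [← hsum]; abel
        rw [hdecomp, form_add]
        have hS : (0:ℝ) ≤ ∑ i, x i ^ 2 := Finset.sum_nonneg fun i _ => sq_nonneg _
        have h1 : -(ε * n * ∑ i, x i ^ 2) ≤ x ⬝ᵥ ((B - Be) *ᵥ x) := by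
          refine form_lower _ ε hεpos.le (fun i j => ?_) x
          have := hBU i j
          simpa [Matrix.sub_apply] using this.le
        have h2 : m * (∑ i, x i ^ 2) ≤ x ⬝ᵥ (D *ᵥ x) := by
          have := combo_form_ge he (1 - s) (s * p' - p) x
          rw [← hD] at this
          exact this
        have hεn : ε * n ≤ m / 2 := by
          rw [hε]
          rw [div_mul_eq_mul_div, div_le_div_iff₀ (by positivity) (by norm_num)]
          have : (n:ℝ) ≤ n + 1 := by linarith
          nlinarith
        nlinarith [mul_le_mul_of_nonneg_right hεn hS]
    have hBF : B = A' + (B - A') := by abel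
    rw [hBF]
    exact hF.1.2.2 _ hA'F _ hpsd


end StmtAux

/-- For an ST-invariant cone subequation `F` with finite Riesz characteristic `p`,
the increasing radial subequation of `F` is `R_p^↑`. -/
theorem stmt2 (n : ℕ) (p : ℝ)
    (F : Set (Matrix (Fin n) (Fin n) ℝ))
    (hF : IsConeSubequation F) (hST : STInvariant F) (hchar : HasRieszChar F p) :
    ∀ t : ℝ, 0 < t → ∀ lam : ℝ, 0 ≤ lam → ∀ a : ℝ, ∀ e : EucSp n, ‖e‖ = 1 →
      ((lam / t) • ((1 : Matrix (Fin n) (Fin n) ℝ) - projMat e) + a • projMat e ∈ F ↔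
        0 ≤ a + ((p - 1) / t) * lam) := by
  intro t ht lam hlam a e he
  have hp := hchar.1
  have hBeF : ((1 : Matrix (Fin n) (Fin n) ℝ) - projMat e) - (p - 1) • projMat e ∈ F := by
    have h := (hchar.2 e he).1
    rwa [hF.1.2.1.closure_eq] at h
  constructor
  · intro hM
    by_contra hcon
    push_neg at hcon
    set lam0 := lam / t with hlam0
    have hlam0' : 0 ≤ lam0 := div_nonneg hlam ht.le
    have hc : a + (p - 1) * lam0 < 0 := by
      have hh : (p - 1) / t * lam = (p - 1) * (lam / t) := by ring
      rw [hh] at hcon; exact hcon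
    set δ : ℝ := -(a + (p - 1) * lam0) / (2 * p) with hδ
    have hppos : 0 < p := lt_of_lt_of_le one_pos hp
    have hδpos : 0 < δ := div_pos (by linarith) (by linarith)
    have hpsd : ((δ • (1 : Matrix (Fin n) (Fin n) ℝ) + (-δ) • projMat e)).PosSemidef :=
      StmtAux.psd_combo he hδpos.le (by linarith)
    have hA1 := hF.1.2.2 _ hM _ hpsd
    have heq : (lam0 • ((1 : Matrix (Fin n) (Fin n) ℝ) - projMat e) + a • projMat e)
        + (δ • 1 + (-δ) • projMat e)
        = (lam0 + δ) • ((1 : Matrix (Fin n) (Fin n) ℝ) - projMat e) + a • projMat e := by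
      module
    rw [heq] at hA1
    have hμ : 0 < lam0 + δ := by linarith
    have hc' : a + (p - 1) * (lam0 + δ) < 0 := by
      have h1 : (p - 1) * δ ≤ p * δ := by nlinarith
      have h2 : p * δ = -(a + (p - 1) * lam0) / 2 := by
        rw [hδ]; field_simp
      have hexp : a + (p - 1) * (lam0 + δ) = (a + (p - 1) * lam0) + (p - 1) * δ := by ring
      linarith
    have hint := StmtAux.key hF hp he hμ hc' hA1
    exact ((hchar.2 e he).2) hint
  · intro hge
    set lam0 := lam / t with hlam0
    have hlam0' : 0 ≤ lam0 := div_nonneg hlam ht.le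
    have hc0 : 0 ≤ a + (p - 1) * lam0 := by
      have hh : (p - 1) / t * lam = (p - 1) * (lam / t) := by ring
      rw [hh] at hge; exact hge
    have h1 : lam0 • (((1 : Matrix (Fin n) (Fin n) ℝ) - projMat e) - (p - 1) • projMat e) ∈ F :=
      hF.2 _ hBeF lam0 hlam0'
    have hpsd : ((0 : ℝ) • (1 : Matrix (Fin n) (Fin n) ℝ)
        + (a + (p - 1) * lam0) • projMat e).PosSemidef :=
      StmtAux.psd_combo he le_rfl (by linarith)
    have h2 := hF.1.2.2 _ h1 _ hpsd
    have heq : lam0 • (((1 : Matrix (Fin n) (Fin n) ℝ) - projMat e) - (p - 1) • projMat e)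
        + ((0 : ℝ) • 1 + (a + (p - 1) * lam0) • projMat e)
        = lam0 • ((1 : Matrix (Fin n) (Fin n) ℝ) - projMat e) + a • projMat e := by
      module
    rw [heq] at h2
    exact h2


end
end

section
/- Let n ≥ 2 and 1 ≤ p < ∞. For A ∈ Sym²(ℝⁿ) let λ₁(A) ≤ ⋯ ≤ λₙ(A) denote its ordered eigenvalues, and define 𝒫_p^{min/2} = {A : λ₁(A) + (p−1)λ₂(A) ≥ 0} and 𝒫_p^{min/max} = {A : λ₁(A) + (p−1)λₙ(A) ≥ 0}. Let F ⊆ Sym²(ℝⁿ) be an ST-invariant cone subequation. Then F has finite increasing Riesz characteristic p (i.e. P_{e⊥} − (p−1)P_e ∈ ∂F for every unit e) if and only if 𝒫_p^{min/2} ⊆ F ⊆ 𝒫_p^{min/max}. In particular, both 𝒫_p^{min/2} and 𝒫_p^{min/max} are cone subequations of Riesz characteristic p. -/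
open Set Filter Topology Matrix

noncomputable section

open scoped Classical in
/-- The ordered (nondecreasing) eigenvalues of a symmetric (Hermitian) real matrix;
junk value `0` if the matrix is not Hermitian. -/
noncomputable def ordEig {n : ℕ} (A : Matrix (Fin n) (Fin n) ℝ) : Fin n → ℝ :=
  if hA : A.IsHermitian then fun k => hA.eigenvalues (Tuple.sort hA.eigenvalues k) else 0

/-- `lamK A k` is the `(k+1)`-st smallest eigenvalue `λ_{k+1}(A)` (for `k < n`). -/
noncomputable def lamK {n : ℕ} (A : Matrix (Fin n) (Fin n) ℝ) (k : ℕ) : ℝ :=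
  if h : k < n then ordEig A ⟨k, h⟩ else 0

/-- `𝒫_p^{min/2} = {A : λ₁(A) + (p−1) λ₂(A) ≥ 0}`. -/
def Pmin2 (n : ℕ) (p : ℝ) : Set (Matrix (Fin n) (Fin n) ℝ) :=
  {A | A.IsSymm ∧ 0 ≤ lamK A 0 + (p - 1) * lamK A 1}

/-- `𝒫_p^{min/max} = {A : λ₁(A) + (p−1) λₙ(A) ≥ 0}`. -/
def PminMax (n : ℕ) (p : ℝ) : Set (Matrix (Fin n) (Fin n) ℝ) :=
  {A | A.IsSymm ∧ 0 ≤ lamK A 0 + (p - 1) * lamK A (n - 1)}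

/-- `𝒫̃_q^{min/max} = {A : λₙ(A) + (q−1) λ₁(A) ≥ 0}`. -/
def PdualMinMax (n : ℕ) (q : ℝ) : Set (Matrix (Fin n) (Fin n) ℝ) :=
  {A | A.IsSymm ∧ 0 ≤ lamK A (n - 1) + (q - 1) * lamK A 0}

/-- `𝒫̃_q^{min/2} = {A : λₙ(A) + (q−1) λ_{n−1}(A) ≥ 0}`. -/
def PdualMin2 (n : ℕ) (q : ℝ) : Set (Matrix (Fin n) (Fin n) ℝ) :=
  {A | A.IsSymm ∧ 0 ≤ lamK A (n - 1) + (q - 1) * lamK A (n - 2)}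

section Aux

abbrev Mat (n : ℕ) := Matrix (Fin n) (Fin n) ℝ

variable {n : ℕ}

lemma sum_dot {ι : Type*} [Fintype ι] (f : ι → Fin n → ℝ) (y : Fin n → ℝ) :
    dotProduct (∑ i, f i) y = ∑ i, dotProduct (f i) y := by
  simp only [dotProduct, Finset.sum_apply, Finset.sum_mul]
  exact Finset.sum_comm

lemma dot_sum {ι : Type*} [Fintype ι] (y : Fin n → ℝ) (f : ι → Fin n → ℝ) :
    dotProduct y (∑ i, f i) = ∑ i, dotProduct y (f i) := by
  simp only [dotProduct, Finset.sum_apply, Finset.mul_sum]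
  exact Finset.sum_comm

lemma dot_combo {ι : Type*} [Fintype ι] [DecidableEq ι] (v : ι → Fin n → ℝ)
    (hv : ∀ i j, dotProduct (v i) (v j) = if i = j then 1 else 0)
    (c d : ι → ℝ) :
    dotProduct (∑ i, c i • v i) (∑ j, d j • v j) = ∑ i, c i * d i := by
  rw [sum_dot]
  refine Finset.sum_congr rfl fun i _ => ?_
  rw [smul_dotProduct, dot_sum]
  have : ∀ j, dotProduct (v i) (d j • v j) = d j * (if i = j then 1 else 0) := by
    intro j; rw [dotProduct_smul, hv i j]; simp
  simp only [this]
  simp [Finset.sum_ite_eq, mul_comm]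

lemma mulVec_combo {ι : Type*} [Fintype ι] (A : Mat n) (v : ι → Fin n → ℝ) (μ : ι → ℝ)
    (hev : ∀ i, A *ᵥ v i = μ i • v i) (c : ι → ℝ) :
    A *ᵥ (∑ i, c i • v i) = ∑ i, (c i * μ i) • v i := by
  have h1 : A *ᵥ (∑ i, c i • v i) = ∑ i, c i • (A *ᵥ v i) := by
    rw [show (A *ᵥ ∑ i, c i • v i) = A.mulVecLin (∑ i, c i • v i) from rfl, map_sum]
    refine Finset.sum_congr rfl fun i _ => ?_
    simp [Matrix.mulVecLin_apply, Matrix.mulVec_smul]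
  rw [h1]
  refine Finset.sum_congr rfl fun i _ => ?_
  rw [hev i, smul_smul]

lemma quad_combo {ι : Type*} [Fintype ι] [DecidableEq ι] (A : Mat n) (v : ι → Fin n → ℝ)
    (hv : ∀ i j, dotProduct (v i) (v j) = if i = j then 1 else 0)
    (μ : ι → ℝ) (hev : ∀ i, A *ᵥ v i = μ i • v i) (c : ι → ℝ) :
    dotProduct (∑ i, c i • v i) (A *ᵥ (∑ i, c i • v i)) = ∑ i, μ i * (c i)^2 := by
  rw [mulVec_combo A v μ hev c, dot_combo v hv]
  exact Finset.sum_congr rfl fun i _ => by ring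

lemma dot_inner (x y : EucSp n) : dotProduct (x : Fin n → ℝ) (y : Fin n → ℝ) = (inner ℝ x y : ℝ) := by
  simp [dotProduct, PiLp.inner_apply, RCLike.inner_apply, starRingEnd_apply]
  exact Finset.sum_congr rfl fun _ _ => mul_comm _ _

lemma onb_dot (b : OrthonormalBasis (Fin n) ℝ (EucSp n)) (i j : Fin n) :
    dotProduct (b i : Fin n → ℝ) (b j) = if i = j then 1 else 0 := by
  rw [dot_inner]; exact orthonormal_iff_ite.mp b.orthonormal i j

lemma onb_sum (b : OrthonormalBasis (Fin n) ℝ (EucSp n)) (x : Fin n → ℝ) :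
    x = ∑ i, (dotProduct (b i : Fin n → ℝ) x) • (b i : Fin n → ℝ) := by
  have h := b.sum_repr (WithLp.toLp 2 x)
  calc x = ((∑ i, b.repr (WithLp.toLp 2 x) i • b i : EucSp n) : Fin n → ℝ) := by rw [h]
    _ = _ := by
        rw [WithLp.ofLp_sum]
        refine Finset.sum_congr rfl fun i _ => ?_
        rw [WithLp.ofLp_smul, b.repr_apply_apply, ← dot_inner]

lemma psd_quad {A : Mat n} (hA : A.PosSemidef) (x : Fin n → ℝ) :
    0 ≤ dotProduct x (A *ᵥ x) := by
  have := hA.dotProduct_mulVec_nonneg x; simpa using this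

lemma card_ici (k : Fin n) : Fintype.card {i : Fin n // k ≤ i} = n - (k : ℕ) := by
  rw [Fintype.card_congr (Equiv.subtypeEquivRight (fun i => (Finset.mem_Ici (a := k)).symm)),
    Fintype.card_coe, Fin.card_Ici]

lemma card_iic (k : Fin n) : Fintype.card {i : Fin n // i ≤ k} = (k : ℕ) + 1 := by
  rw [Fintype.card_congr (Equiv.subtypeEquivRight (fun i => (Finset.mem_Iic (a := k)).symm)),
    Fintype.card_coe, Fin.card_Iic]

lemma dot_self_pos {x : EucSp n} (hx : x ≠ 0) :
    0 < dotProduct (x : Fin n → ℝ) (x : Fin n → ℝ) := by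
  rw [dot_inner, real_inner_self_eq_norm_sq]
  exact pow_pos (norm_pos_iff.mpr hx) 2

lemma eig_mono {A B : Mat n} (hAB : (B - A).PosSemidef)
    (v w : OrthonormalBasis (Fin n) ℝ (EucSp n)) (μ ν : Fin n → ℝ)
    (hμ : Monotone μ) (hν : Monotone ν)
    (hv : ∀ i, A *ᵥ (v i : Fin n → ℝ) = μ i • (v i : Fin n → ℝ))
    (hw : ∀ i, B *ᵥ (w i : Fin n → ℝ) = ν i • (w i : Fin n → ℝ))
    (k : Fin n) : μ k ≤ ν k := by
  classical
  set V := Submodule.span ℝ (Set.range fun i : {i : Fin n // k ≤ i} => (v i : EucSp n)) with hVdef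
  set W := Submodule.span ℝ (Set.range fun i : {i : Fin n // i ≤ k} => (w i : EucSp n)) with hWdef
  have hdV : Module.finrank ℝ V = n - (k : ℕ) := by
    rw [hVdef, show (fun i : {i : Fin n // k ≤ i} => (v i : EucSp n)) = ⇑v ∘ Subtype.val from rfl,
      finrank_span_eq_card
      ((v.orthonormal.comp _ Subtype.val_injective).linearIndependent), card_ici]
  have hdW : Module.finrank ℝ W = (k : ℕ) + 1 := by
    rw [hWdef, show (fun i : {i : Fin n // i ≤ k} => (w i : EucSp n)) = ⇑w ∘ Subtype.val from rfl,
      finrank_span_eq_card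
      ((w.orthonormal.comp _ Subtype.val_injective).linearIndependent), card_iic]
  have hsum := Submodule.finrank_sup_add_finrank_inf_eq V W
  have hle : Module.finrank ℝ ↥(V ⊔ W) ≤ n :=
    le_trans (Submodule.finrank_le _) (le_of_eq finrank_euclideanSpace_fin)
  have hinf : V ⊓ W ≠ ⊥ := by
    intro hbot
    rw [hbot, finrank_bot, add_zero, hdV, hdW] at hsum
    have := k.2
    omega
  obtain ⟨x, hxVW, hx0⟩ := Submodule.exists_mem_ne_zero_of_ne_bot hinf
  obtain ⟨c, hc⟩ := (Submodule.mem_span_range_iff_exists_fun ℝ).mp (hxVW.1 : x ∈ V)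
  obtain ⟨d, hd⟩ := (Submodule.mem_span_range_iff_exists_fun ℝ).mp (hxVW.2 : x ∈ W)
  -- subtype families are dot-orthonormal
  have hvd : ∀ i j : {i : Fin n // k ≤ i},
      dotProduct ((v i : Fin n → ℝ)) (v j) = if i = j then 1 else 0 := by
    intro i j; rw [onb_dot]
    by_cases h : i = j
    · simp [h]
    · rw [if_neg h, if_neg (fun hh => h (Subtype.ext hh))]
  have hwd : ∀ i j : {i : Fin n // i ≤ k},
      dotProduct ((w i : Fin n → ℝ)) (w j) = if i = j then 1 else 0 := by
    intro i j; rw [onb_dot]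
    by_cases h : i = j
    · simp [h]
    · rw [if_neg h, if_neg (fun hh => h (Subtype.ext hh))]
  have hcx : (x : Fin n → ℝ) = ∑ i : {i : Fin n // k ≤ i}, c i • (v i : Fin n → ℝ) := by
    simp only [← hc, WithLp.ofLp_sum, WithLp.ofLp_smul]
  have hdx : (x : Fin n → ℝ) = ∑ i : {i : Fin n // i ≤ k}, d i • (w i : Fin n → ℝ) := by
    simp only [← hd, WithLp.ofLp_sum, WithLp.ofLp_smul]
  have hq : 0 < dotProduct (x : Fin n → ℝ) (x : Fin n → ℝ) := dot_self_pos hx0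
  -- quadratic forms
  have hAq : dotProduct (x : Fin n → ℝ) (A *ᵥ x) = ∑ i : {i : Fin n // k ≤ i}, μ i * (c i)^2 := by
    rw [hcx]; exact quad_combo A _ hvd _ (fun i => hv i) c
  have hBq : dotProduct (x : Fin n → ℝ) (B *ᵥ x) = ∑ i : {i : Fin n // i ≤ k}, ν i * (d i)^2 := by
    rw [hdx]; exact quad_combo B _ hwd _ (fun i => hw i) d
  have hxx1 : dotProduct (x : Fin n → ℝ) (x : Fin n → ℝ) = ∑ i : {i : Fin n // k ≤ i}, (c i)^2 := by
    conv_lhs => rw [hcx]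
    rw [dot_combo _ hvd c c]
    exact Finset.sum_congr rfl fun i _ => (sq (c i)).symm ▸ rfl
  have hxx2 : dotProduct (x : Fin n → ℝ) (x : Fin n → ℝ) = ∑ i : {i : Fin n // i ≤ k}, (d i)^2 := by
    conv_lhs => rw [hdx]
    rw [dot_combo _ hwd d d]
    exact Finset.sum_congr rfl fun i _ => (sq (d i)).symm ▸ rfl
  have h1 : μ k * dotProduct (x : Fin n → ℝ) (x : Fin n → ℝ)
      ≤ dotProduct (x : Fin n → ℝ) (A *ᵥ x) := by
    rw [hAq, hxx1, Finset.mul_sum]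
    refine Finset.sum_le_sum fun i _ => ?_
    exact mul_le_mul_of_nonneg_right (hμ i.2) (sq_nonneg _)
  have h2 : dotProduct (x : Fin n → ℝ) (B *ᵥ x)
      ≤ ν k * dotProduct (x : Fin n → ℝ) (x : Fin n → ℝ) := by
    rw [hBq, hxx2, Finset.mul_sum]
    refine Finset.sum_le_sum fun i _ => ?_
    exact mul_le_mul_of_nonneg_right (hν i.2) (sq_nonneg _)
  have h3 : dotProduct (x : Fin n → ℝ) (A *ᵥ x)
      ≤ dotProduct (x : Fin n → ℝ) (B *ᵥ x) := by
    have := psd_quad hAB (x : Fin n → ℝ)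
    rw [Matrix.sub_mulVec, dotProduct_sub] at this
    linarith
  have : μ k * dotProduct (x : Fin n → ℝ) (x : Fin n → ℝ)
      ≤ ν k * dotProduct (x : Fin n → ℝ) (x : Fin n → ℝ) := by linarith
  exact le_of_mul_le_mul_right (by linarith [this]) hq

lemma herm_smul {A : Mat n} (hA : A.IsHermitian) (t : ℝ) : (t • A).IsHermitian := by
  ext i j
  have := congrFun (congrFun hA.eq i) j
  simp only [Matrix.conjTranspose_apply, Matrix.smul_apply, star_trivial] at this ⊢
  rw [this]

-- ### ordEig / lamK layer

def sortedBasis {A : Mat n} (hA : A.IsHermitian) : OrthonormalBasis (Fin n) ℝ (EucSp n) :=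
  hA.eigenvectorBasis.reindex (Tuple.sort hA.eigenvalues).symm

lemma ordEig_def {A : Mat n} (hA : A.IsHermitian) :
    ordEig A = fun k => hA.eigenvalues (Tuple.sort hA.eigenvalues k) := by
  rw [ordEig, dif_pos hA]

lemma sortedBasis_eigen {A : Mat n} (hA : A.IsHermitian) (k : Fin n) :
    A *ᵥ (sortedBasis hA k : Fin n → ℝ) = ordEig A k • (sortedBasis hA k : Fin n → ℝ) := by
  rw [ordEig_def hA, sortedBasis, OrthonormalBasis.reindex_apply, Equiv.symm_symm]
  exact hA.mulVec_eigenvectorBasis (Tuple.sort hA.eigenvalues k)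

lemma ordEig_monotone {A : Mat n} (hA : A.IsHermitian) : Monotone (ordEig A) := by
  rw [ordEig_def hA]
  exact Tuple.monotone_sort hA.eigenvalues

lemma eig_unique {A : Mat n} (hA : A.IsHermitian) (v : OrthonormalBasis (Fin n) ℝ (EucSp n))
    (μ : Fin n → ℝ) (hμ : Monotone μ)
    (hv : ∀ i, A *ᵥ (v i : Fin n → ℝ) = μ i • (v i : Fin n → ℝ)) (k : Fin n) :
    μ k = ordEig A k := by
  have h0 : (A - A).PosSemidef := by rw [sub_self]; exact Matrix.PosSemidef.zero
  exact le_antisymm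
    (eig_mono h0 v (sortedBasis hA) μ (ordEig A) hμ (ordEig_monotone hA) hv (sortedBasis_eigen hA) k)
    (eig_mono h0 (sortedBasis hA) v (ordEig A) μ (ordEig_monotone hA) hμ (sortedBasis_eigen hA) hv k)

lemma ordEig_weyl {A B : Mat n} (hA : A.IsHermitian) (hB : B.IsHermitian)
    (h : (B - A).PosSemidef) (k : Fin n) : ordEig A k ≤ ordEig B k :=
  eig_mono h (sortedBasis hA) (sortedBasis hB) _ _ (ordEig_monotone hA) (ordEig_monotone hB)
    (sortedBasis_eigen hA) (sortedBasis_eigen hB) k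

lemma ordEig_smul {A : Mat n} (hA : A.IsHermitian) {t : ℝ} (ht : 0 ≤ t) (k : Fin n) :
    ordEig (t • A) k = t * ordEig A k := by
  have hA' : (t • A).IsHermitian := herm_smul hA t
  refine (eig_unique hA' (sortedBasis hA) (fun k => t * ordEig A k)
    (fun a b hab => mul_le_mul_of_nonneg_left (ordEig_monotone hA hab) ht) (fun i => ?_) k).symm
  rw [smul_mulVec, sortedBasis_eigen hA, smul_smul]

lemma ordEig_shift {A : Mat n} (hA : A.IsHermitian) (c : ℝ) (k : Fin n) :
    ordEig (A + c • 1) k = ordEig A k + c := by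
  have h1 : ((c : ℝ) • (1 : Mat n)).IsHermitian := herm_smul Matrix.isHermitian_one c
  have hA' : (A + c • 1).IsHermitian := hA.add h1
  refine (eig_unique hA' (sortedBasis hA) (fun k => ordEig A k + c)
    ((ordEig_monotone hA).add_const c) (fun i => ?_) k).symm
  rw [Matrix.add_mulVec, smul_mulVec, Matrix.one_mulVec, sortedBasis_eigen hA, add_smul]

lemma lamK_eq {A : Mat n} {k : ℕ} (h : k < n) : lamK A k = ordEig A ⟨k, h⟩ := by
  rw [lamK, dif_pos h]

lemma herm_of_symm {A : Mat n} (hA : A.IsSymm) : A.IsHermitian := by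
  rw [Matrix.IsHermitian, Matrix.conjTranspose]
  ext i j
  simp only [Matrix.map_apply, Matrix.transpose_apply, star_trivial]
  rw [← Matrix.transpose_apply A j i, hA]

lemma symm_of_herm {A : Mat n} (hA : A.IsHermitian) : A.IsSymm := by
  rw [Matrix.IsSymm]
  ext i j
  have := congrFun (congrFun hA i) j
  simpa using this

-- ### quadratic decompositions and psd constructors

lemma psd_of_quad {M : Mat n} (hM : M.IsHermitian)
    (h : ∀ x : Fin n → ℝ, 0 ≤ dotProduct x (M *ᵥ x)) : M.PosSemidef :=
  .of_dotProduct_mulVec_nonneg hM fun x => by simpa using h x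

lemma projMat_mulVec (e : EucSp n) (x : Fin n → ℝ) :
    projMat e *ᵥ x = (dotProduct (e : Fin n → ℝ) x) • (e : Fin n → ℝ) := by
  funext j
  simp only [projMat, Matrix.mulVec, dotProduct, Matrix.of_apply]
  show ∑ k : Fin n, e j * e k * x k = (∑ i : Fin n, e i * x i) * e j
  rw [Finset.sum_mul]
  exact Finset.sum_congr rfl fun k _ => by ring

lemma quad_projMat (e : EucSp n) (x : Fin n → ℝ) :
    dotProduct x (projMat e *ᵥ x) = (dotProduct (e : Fin n → ℝ) x)^2 := by
  rw [projMat_mulVec, dotProduct_smul]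
  rw [dotProduct_comm x (e : Fin n → ℝ)]
  simp [sq]

lemma quad_one (x : Fin n → ℝ) :
    dotProduct x ((1 : Mat n) *ᵥ x) = dotProduct x x := by
  rw [Matrix.one_mulVec]

lemma projMat_herm (e : EucSp n) : (projMat e).IsHermitian := by
  ext i j
  simp only [projMat, Matrix.conjTranspose_apply, Matrix.of_apply, star_trivial]
  ring

lemma projMat_psd (e : EucSp n) : (projMat e).PosSemidef := by
  refine psd_of_quad (projMat_herm e) fun x => ?_
  rw [quad_projMat]
  exact sq_nonneg _

lemma one_sub_projMat_psd {e : EucSp n} (he : ‖e‖ = 1) : ((1 : Mat n) - projMat e).PosSemidef := by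
  refine psd_of_quad (Matrix.isHermitian_one.sub (projMat_herm e)) fun x => ?_
  rw [Matrix.sub_mulVec, dotProduct_sub, quad_one, quad_projMat]
  have h1 : dotProduct (e : Fin n → ℝ) x * dotProduct (e : Fin n → ℝ) x
      ≤ dotProduct (e : Fin n → ℝ) (e : Fin n → ℝ) * dotProduct x x := by
    rw [dot_inner e (WithLp.toLp 2 x), dot_inner e e,
      dot_inner (WithLp.toLp 2 x) (WithLp.toLp 2 x)]
    exact real_inner_mul_inner_self_le e (WithLp.toLp 2 x)
  have h2 : dotProduct (e : Fin n → ℝ) (e : Fin n → ℝ) = 1 := by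
    rw [dot_inner e e, real_inner_self_eq_norm_sq, he]; norm_num
  rw [h2, one_mul] at h1
  have : (dotProduct (e : Fin n → ℝ) x)^2
      = dotProduct (e : Fin n → ℝ) x * dotProduct (e : Fin n → ℝ) x := sq _
  linarith

lemma psd_smul {M : Mat n} (hM : M.PosSemidef) {t : ℝ} (ht : 0 ≤ t) : (t • M).PosSemidef := by
  refine psd_of_quad (herm_smul hM.1 t) fun x => ?_
  rw [smul_mulVec, dotProduct_smul]
  exact mul_nonneg ht (psd_quad hM x)

lemma psd_add {M N : Mat n} (hM : M.PosSemidef) (hN : N.PosSemidef) : (M + N).PosSemidef := by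
  refine psd_of_quad (hM.1.add hN.1) fun x => ?_
  rw [Matrix.add_mulVec, dotProduct_add]
  exact add_nonneg (psd_quad hM x) (psd_quad hN x)

-- ### quadratic form in sorted eigenbasis

lemma quad_sorted {A : Mat n} (hA : A.IsHermitian) (x : Fin n → ℝ) :
    dotProduct x (A *ᵥ x)
      = ∑ i, ordEig A i * (dotProduct (sortedBasis hA i : Fin n → ℝ) x)^2 := by
  conv_lhs => rw [onb_sum (sortedBasis hA) x]
  exact quad_combo A _ (onb_dot (sortedBasis hA)) _ (sortedBasis_eigen hA) _

lemma dot_self_sorted {A : Mat n} (hA : A.IsHermitian) (x : Fin n → ℝ) :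
    dotProduct x x
      = ∑ i, (dotProduct (sortedBasis hA i : Fin n → ℝ) x)^2 := by
  conv_lhs => rw [onb_sum (sortedBasis hA) x]
  rw [dot_combo _ (onb_dot (sortedBasis hA))]
  exact Finset.sum_congr rfl fun i _ => (sq _).symm

lemma quad_mix (a b' : ℝ) (e : EucSp n) (x : Fin n → ℝ) :
    dotProduct x ((a • ((1 : Mat n) - projMat e) + b' • projMat e) *ᵥ x)
      = a * (dotProduct x x - (dotProduct (e : Fin n → ℝ) x)^2)
        + b' * (dotProduct (e : Fin n → ℝ) x)^2 := by
  rw [Matrix.add_mulVec, smul_mulVec, smul_mulVec, Matrix.sub_mulVec,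
    Matrix.one_mulVec, dotProduct_add, dotProduct_smul, dotProduct_smul,
    dotProduct_sub, quad_projMat]
  simp only [smul_eq_mul]
  try ring

lemma psd_sub_lower {A : Mat n} (hA : A.IsHermitian) (hn0 : 0 < n) (k1 : Fin n)
    (hk1 : ∀ i : Fin n, i ≠ ⟨0, hn0⟩ → k1 ≤ i) :
    (A - (ordEig A k1 • ((1 : Mat n) - projMat (sortedBasis hA ⟨0, hn0⟩))
        + ordEig A ⟨0, hn0⟩ • projMat (sortedBasis hA ⟨0, hn0⟩))).PosSemidef := by
  set k0 : Fin n := ⟨0, hn0⟩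
  set e : EucSp n := sortedBasis hA k0 with he
  have hMh : (ordEig A k1 • ((1 : Mat n) - projMat e)
      + ordEig A k0 • projMat e).IsHermitian :=
    (herm_smul (Matrix.isHermitian_one.sub (projMat_herm e)) _).add
      (herm_smul (projMat_herm e) _)
  refine psd_of_quad (hA.sub hMh) fun x => ?_
  set c : Fin n → ℝ := fun i => dotProduct (sortedBasis hA i : Fin n → ℝ) x with hc
  have key : dotProduct x
      ((A - (ordEig A k1 • ((1 : Mat n) - projMat e) + ordEig A k0 • projMat e)) *ᵥ x)
      = ∑ i ∈ Finset.univ.erase k0, (ordEig A i - ordEig A k1) * (c i)^2 := by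
    rw [Matrix.sub_mulVec, dotProduct_sub, quad_sorted hA, quad_mix,
      dot_self_sorted hA]
    have hce : dotProduct (e : Fin n → ℝ) x = c k0 := rfl
    rw [hce]
    have e1 : ∑ i, ordEig A i * (c i)^2
        = (∑ i ∈ Finset.univ.erase k0, ordEig A i * (c i)^2) + ordEig A k0 * (c k0)^2 :=
      (Finset.sum_erase_add _ _ (Finset.mem_univ k0)).symm
    have e2 : ∑ i, (c i)^2 = (∑ i ∈ Finset.univ.erase k0, (c i)^2) + (c k0)^2 :=
      (Finset.sum_erase_add _ _ (Finset.mem_univ k0)).symm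
    have e3 : ∑ i ∈ Finset.univ.erase k0, (ordEig A i - ordEig A k1) * (c i)^2
        = (∑ i ∈ Finset.univ.erase k0, ordEig A i * (c i)^2)
          - ordEig A k1 * ∑ i ∈ Finset.univ.erase k0, (c i)^2 := by
      rw [Finset.mul_sum, ← Finset.sum_sub_distrib]
      exact Finset.sum_congr rfl fun i _ => by ring
    rw [e1, e2, e3]
    ring
  rw [key]
  refine Finset.sum_nonneg fun i hi => ?_
  have : ordEig A k1 ≤ ordEig A i := ordEig_monotone hA (hk1 i (Finset.ne_of_mem_erase hi))
  have := sq_nonneg (c i)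
  nlinarith

lemma psd_sub_upper {A : Mat n} (hA : A.IsHermitian) (hn0 : 0 < n) (kN : Fin n)
    (hkN : ∀ i : Fin n, i ≤ kN) :
    ((ordEig A kN • ((1 : Mat n) - projMat (sortedBasis hA ⟨0, hn0⟩))
        + ordEig A ⟨0, hn0⟩ • projMat (sortedBasis hA ⟨0, hn0⟩)) - A).PosSemidef := by
  set k0 : Fin n := ⟨0, hn0⟩
  set e : EucSp n := sortedBasis hA k0 with he
  have hMh : (ordEig A kN • ((1 : Mat n) - projMat e)
      + ordEig A k0 • projMat e).IsHermitian :=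
    (herm_smul (Matrix.isHermitian_one.sub (projMat_herm e)) _).add
      (herm_smul (projMat_herm e) _)
  refine psd_of_quad (hMh.sub hA) fun x => ?_
  set c : Fin n → ℝ := fun i => dotProduct (sortedBasis hA i : Fin n → ℝ) x with hc
  have key : dotProduct x
      (((ordEig A kN • ((1 : Mat n) - projMat e) + ordEig A k0 • projMat e) - A) *ᵥ x)
      = ∑ i ∈ Finset.univ.erase k0, (ordEig A kN - ordEig A i) * (c i)^2 := by
    rw [Matrix.sub_mulVec, dotProduct_sub, quad_sorted hA, quad_mix,
      dot_self_sorted hA]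
    have hce : dotProduct (e : Fin n → ℝ) x = c k0 := rfl
    rw [hce]
    have e1 : ∑ i, ordEig A i * (c i)^2
        = (∑ i ∈ Finset.univ.erase k0, ordEig A i * (c i)^2) + ordEig A k0 * (c k0)^2 :=
      (Finset.sum_erase_add _ _ (Finset.mem_univ k0)).symm
    have e2 : ∑ i, (c i)^2 = (∑ i ∈ Finset.univ.erase k0, (c i)^2) + (c k0)^2 :=
      (Finset.sum_erase_add _ _ (Finset.mem_univ k0)).symm
    have e3 : ∑ i ∈ Finset.univ.erase k0, (ordEig A kN - ordEig A i) * (c i)^2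
        = ordEig A kN * (∑ i ∈ Finset.univ.erase k0, (c i)^2)
          - ∑ i ∈ Finset.univ.erase k0, ordEig A i * (c i)^2 := by
      rw [Finset.mul_sum, ← Finset.sum_sub_distrib]
      exact Finset.sum_congr rfl fun i _ => by ring
    rw [e1, e2, e3]
    ring
  rw [key]
  refine Finset.sum_nonneg fun i hi => ?_
  have : ordEig A i ≤ ordEig A kN := ordEig_monotone hA (hkN i)
  have := sq_nonneg (c i)
  nlinarith

lemma psd_of_ordEig_nonneg {A : Mat n} (hA : A.IsHermitian) (hn0 : 0 < n)
    (h : 0 ≤ ordEig A ⟨0, hn0⟩) : A.PosSemidef := by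
  refine psd_of_quad hA fun x => ?_
  rw [quad_sorted hA]
  refine Finset.sum_nonneg fun i _ => mul_nonneg ?_ (sq_nonneg _)
  exact le_trans h (ordEig_monotone hA (by exact Fin.mk_le_of_le_val (Nat.zero_le _)))

lemma sortedBasis_norm {A : Mat n} (hA : A.IsHermitian) (k : Fin n) :
    ‖(sortedBasis hA k : EucSp n)‖ = 1 :=
  (sortedBasis hA).orthonormal.1 k

-- ### eigenvalues of a • P_{e⊥} + b • P_e

lemma ordEig_mix {e : EucSp n} (he : ‖e‖ = 1) {a b' : ℝ} (hba : b' ≤ a) (hn0 : 0 < n) :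
    ordEig (a • ((1 : Mat n) - projMat e) + b' • projMat e)
      = fun k => if k = ⟨0, hn0⟩ then b' else a := by
  classical
  set k0 : Fin n := ⟨0, hn0⟩
  have hcard : Module.finrank ℝ (EucSp n) = Fintype.card (Fin n) := by
    simp [finrank_euclideanSpace_fin]
  have hortho : Orthonormal ℝ (({k0} : Set (Fin n)).restrict (fun _ => e)) := by
    constructor
    · intro i; exact he
    · intro i j hij
      exact absurd (Subtype.ext (i.2.trans j.2.symm)) hij
  obtain ⟨w, hw⟩ := hortho.exists_orthonormalBasis_extension_of_card_eq hcard
  have hw0 : w k0 = e := hw k0 rfl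
  set M : Mat n := a • ((1 : Mat n) - projMat e) + b' • projMat e with hM
  have hMh : M.IsHermitian :=
    (herm_smul (Matrix.isHermitian_one.sub (projMat_herm e)) _).add
      (herm_smul (projMat_herm e) _)
  set μ : Fin n → ℝ := fun k => if k = k0 then b' else a with hμdef
  have hμ : Monotone μ := by
    intro i j hij
    by_cases hi : i = k0
    · by_cases hj : j = k0 <;> simp [hμdef, hi, hj, hba]
    · have hj : j ≠ k0 := by
        intro hj
        exact hi (le_antisymm (hj ▸ hij) (Fin.mk_le_of_le_val (Nat.zero_le _)) |>.symm ▸ rfl)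
      simp [hμdef, hi, hj]
  have heig : ∀ i, M *ᵥ (w i : Fin n → ℝ) = μ i • (w i : Fin n → ℝ) := by
    intro i
    have hproj : projMat e *ᵥ (w i : Fin n → ℝ)
        = (if i = k0 then (1:ℝ) else 0) • (e : Fin n → ℝ) := by
      rw [projMat_mulVec]
      congr 1
      rw [← hw0, onb_dot w]
      simp [eq_comm]
    rw [hM, Matrix.add_mulVec, smul_mulVec, smul_mulVec, Matrix.sub_mulVec,
      Matrix.one_mulVec, hproj]
    by_cases hi : i = k0
    · subst hi
      simp [hw0, hμdef]
    · simp [hi, hμdef]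
  funext k
  exact (eig_unique hMh w μ hμ heig k).symm

-- ### topology on matrices

lemma entry_ball_mem_nhds (A : Mat n) {δ : ℝ} (hδ : 0 < δ) :
    {B : Mat n | ∀ i j, |B i j - A i j| < δ} ∈ 𝓝 A := by
  have hopen : IsOpen {B : Mat n | ∀ i j, |B i j - A i j| < δ} := by
    have hset : {B : Mat n | ∀ i j, |B i j - A i j| < δ}
        = ⋂ i, ⋂ j, {B : Mat n | |B i j - A i j| < δ} := by
      ext B; simp
    rw [hset]
    refine isOpen_iInter_of_finite fun i => isOpen_iInter_of_finite fun j => ?_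
    have hc : Continuous fun B : Mat n => |B i j - A i j| :=
      ((continuous_id.matrix_elem i j).sub continuous_const).abs
    exact isOpen_lt hc continuous_const
  exact hopen.mem_nhds (by simp [hδ])

lemma exists_pos_sub_smul_mem {A P : Mat n} {U : Set (Mat n)} (hU : U ∈ 𝓝 A) :
    ∃ t : ℝ, 0 < t ∧ A - t • P ∈ U := by
  have hcont : Continuous fun t : ℝ => A - t • P :=
    continuous_const.sub (continuous_id.smul continuous_const)
  have h0 : Filter.Tendsto (fun t : ℝ => A - t • P) (𝓝 0) (𝓝 A) := by
    have := hcont.tendsto 0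
    simpa using this
  have h1 : Filter.Tendsto (fun t : ℝ => A - t • P) (𝓝[>] 0) (𝓝 A) :=
    h0.mono_left nhdsWithin_le_nhds
  have h2 : ∀ᶠ t in 𝓝[>] (0:ℝ), A - t • P ∈ U := h1.eventually_mem hU
  have h3 : ∀ᶠ t in 𝓝[>] (0:ℝ), (0:ℝ) < t := eventually_mem_nhdsWithin
  obtain ⟨t, htU, ht⟩ := (h2.and h3).exists
  exact ⟨t, ht, htU⟩

lemma symm_closed : IsClosed {A : Mat n | A.IsSymm} := by
  have hset : {A : Mat n | A.IsSymm} = ⋂ i, ⋂ j, {A : Mat n | A j i = A i j} := by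
    ext A
    simp only [Set.mem_setOf_eq, Set.mem_iInter]
    constructor
    · intro h i j; exact h.apply i j
    · intro h
      ext i j
      rw [Matrix.transpose_apply]
      exact h i j
  rw [hset]
  refine isClosed_iInter fun i => isClosed_iInter fun j => ?_
  exact isClosed_eq ((continuous_apply i).comp (continuous_apply j))
    ((continuous_apply j).comp (continuous_apply i))

-- ### Lipschitz bound for ordEig

lemma entries_psd {M : Mat n} (hM : M.IsHermitian) {δ : ℝ} (hδ : 0 ≤ δ)
    (h : ∀ i j, |M i j| ≤ δ) : (((n : ℝ) * δ) • (1 : Mat n) - M).PosSemidef := by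
  refine psd_of_quad ((herm_smul Matrix.isHermitian_one _).sub hM) fun x => ?_
  rw [Matrix.sub_mulVec, dotProduct_sub, smul_mulVec, Matrix.one_mulVec,
    dotProduct_smul]
  have hquad : dotProduct x (M *ᵥ x) ≤ δ * (∑ i, |x i|)^2 := by
    have hle : dotProduct x (M *ᵥ x) ≤ ∑ i, ∑ j, |x i| * (δ * |x j|) := by
      show ∑ i, x i * ∑ j, M i j * x j ≤ ∑ i, ∑ j, |x i| * (δ * |x j|)
      refine Finset.sum_le_sum fun i _ => ?_
      rw [Finset.mul_sum]
      refine Finset.sum_le_sum fun j _ => ?_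
      calc x i * (M i j * x j) ≤ |x i * (M i j * x j)| := le_abs_self _
        _ = |x i| * (|M i j| * |x j|) := by rw [abs_mul, abs_mul]
        _ ≤ |x i| * (δ * |x j|) := by
            refine mul_le_mul_of_nonneg_left ?_ (abs_nonneg _)
            exact mul_le_mul_of_nonneg_right (h i j) (abs_nonneg _)
    calc dotProduct x (M *ᵥ x) ≤ ∑ i, ∑ j, |x i| * (δ * |x j|) := hle
      _ = δ * (∑ i, |x i|)^2 := by
          rw [sq, Finset.sum_mul]
          rw [Finset.mul_sum]
          refine Finset.sum_congr rfl fun i _ => ?_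
          rw [Finset.mul_sum, Finset.mul_sum]
          refine Finset.sum_congr rfl fun j _ => by ring
  have hcs : (∑ i, |x i|)^2 ≤ (n : ℝ) * dotProduct x x := by
    have := Finset.sum_mul_sq_le_sq_mul_sq Finset.univ (fun _ => (1:ℝ)) (fun i => |x i|)
    simp only [one_mul, one_pow] at this
    calc (∑ i, |x i|)^2 ≤ (∑ _i : Fin n, (1:ℝ)) * ∑ i, |x i|^2 := this
      _ = (n : ℝ) * dotProduct x x := by
          rw [dotProduct]
          congr 1
          · simp
          · exact Finset.sum_congr rfl fun i _ => by rw [sq_abs]; ring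
  have : dotProduct x (M *ᵥ x) ≤ (n : ℝ) * δ * dotProduct x x := by
    calc dotProduct x (M *ᵥ x) ≤ δ * (∑ i, |x i|)^2 := hquad
      _ ≤ δ * ((n : ℝ) * dotProduct x x) := mul_le_mul_of_nonneg_left hcs hδ
      _ = (n : ℝ) * δ * dotProduct x x := by ring
  have hsm : ((n : ℝ) * δ) • dotProduct x x
      = (n : ℝ) * δ * dotProduct x x := rfl
  linarith [hsm ▸ this]

lemma ordEig_close {A B : Mat n} (hA : A.IsHermitian) (hB : B.IsHermitian) {δ : ℝ} (hδ : 0 ≤ δ)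
    (h : ∀ i j, |A i j - B i j| ≤ δ) (k : Fin n) :
    ordEig A k ≤ ordEig B k + (n : ℝ) * δ := by
  have h1 : (((n:ℝ)*δ) • (1:Mat n) - (A - B)).PosSemidef :=
    entries_psd (hA.sub hB) hδ (fun i j => by simpa using h i j)
  have h2 : ((B + ((n:ℝ)*δ) • 1) - A) = ((n:ℝ)*δ) • (1:Mat n) - (A - B) := by abel
  have h3 := ordEig_weyl hA (hB.add (herm_smul Matrix.isHermitian_one _)) (h2 ▸ h1) k
  rwa [ordEig_shift hB] at h3

lemma closed_aux {q : ℝ} (hq : 0 ≤ q) {k₁ k₂ : ℕ} (h₁ : k₁ < n) (h₂ : k₂ < n) :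
    IsClosed {A : Mat n | A.IsSymm ∧ 0 ≤ lamK A k₁ + q * lamK A k₂} := by
  refine isClosed_of_closure_subset fun A hA => ?_
  have hAs : A.IsSymm := by
    have hsub : {A : Mat n | A.IsSymm ∧ 0 ≤ lamK A k₁ + q * lamK A k₂} ⊆ {A : Mat n | A.IsSymm} :=
      fun B hB => hB.1
    have := closure_mono hsub hA
    rwa [symm_closed.closure_eq] at this
  refine ⟨hAs, ?_⟩
  by_contra hneg
  push_neg at hneg
  set ε := -(lamK A k₁ + q * lamK A k₂) with hε
  have hεpos : 0 < ε := by simp only [hε]; linarith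
  set δ := ε / ((1+q) * (n+1)) with hδdef
  have hδ : 0 < δ := div_pos hεpos (by positivity)
  obtain ⟨B, hB⟩ := mem_closure_iff_nhds.mp hA _ (entry_ball_mem_nhds A hδ)
  obtain ⟨hBU, hBS⟩ := hB
  have hAh := herm_of_symm hAs
  have hBh := herm_of_symm hBS.1
  have hc : ∀ i j, |B i j - A i j| ≤ δ := fun i j => le_of_lt (hBU i j)
  have e4 : lamK B k₁ ≤ lamK A k₁ + (n:ℝ)*δ := by
    rw [lamK_eq (A := A) h₁, lamK_eq (A := B) h₁]
    exact ordEig_close hBh hAh hδ.le hc _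
  have e5 : lamK B k₂ ≤ lamK A k₂ + (n:ℝ)*δ := by
    rw [lamK_eq (A := A) h₂, lamK_eq (A := B) h₂]
    exact ordEig_close hBh hAh hδ.le hc _
  have e6 : q * lamK B k₂ ≤ q * (lamK A k₂ + (n:ℝ)*δ) := mul_le_mul_of_nonneg_left e5 hq
  have hkey : (1+q) * ((n:ℝ)+1) * δ = ε := by
    rw [hδdef]
    field_simp
  have h8 : 0 < (1+q)*δ := by positivity
  have h9 := hBS.2
  nlinarith

lemma pmin2_closed {p : ℝ} (hn : 2 ≤ n) (hp : 1 ≤ p) : IsClosed (Pmin2 n p) :=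
  closed_aux (q := p - 1) (by linarith) (by omega) (by omega)

lemma pminmax_closed {p : ℝ} (hn : 2 ≤ n) (hp : 1 ≤ p) : IsClosed (PminMax n p) :=
  closed_aux (q := p - 1) (by linarith) (by omega) (by omega : n - 1 < n)

-- ### cone subequation structure of the model sets

lemma model_cone {q : ℝ} (hq : 0 ≤ q) {k₁ k₂ : ℕ} (h₁ : k₁ < n) (h₂ : k₂ < n) :
    IsConeSubequation {A : Mat n | A.IsSymm ∧ 0 ≤ lamK A k₁ + q * lamK A k₂} := by
  refine ⟨⟨fun A hA => hA.1, closed_aux hq h₁ h₂, ?_⟩, ?_⟩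
  · rintro A ⟨hAs, hAv⟩ P hP
    have hAh := herm_of_symm hAs
    have hAPh := hAh.add hP.1
    refine ⟨symm_of_herm hAPh, ?_⟩
    have hsub : ((A + P) - A).PosSemidef := by
      have : (A + P) - A = P := by abel
      rw [this]; exact hP
    have w₁ : lamK A k₁ ≤ lamK (A + P) k₁ := by
      rw [lamK_eq (A := A) h₁, lamK_eq (A := A + P) h₁]
      exact ordEig_weyl hAh hAPh hsub _
    have w₂ : lamK A k₂ ≤ lamK (A + P) k₂ := by
      rw [lamK_eq (A := A) h₂, lamK_eq (A := A + P) h₂]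
      exact ordEig_weyl hAh hAPh hsub _
    have := mul_le_mul_of_nonneg_left w₂ hq
    have := hAv
    nlinarith
  · rintro A ⟨hAs, hAv⟩ t ht
    have hAh := herm_of_symm hAs
    refine ⟨symm_of_herm (herm_smul hAh t), ?_⟩
    have s₁ : lamK (t • A) k₁ = t * lamK A k₁ := by
      rw [lamK_eq (A := A) h₁, lamK_eq (A := t • A) h₁]
      exact ordEig_smul hAh ht _
    have s₂ : lamK (t • A) k₂ = t * lamK A k₂ := by
      rw [lamK_eq (A := A) h₂, lamK_eq (A := t • A) h₂]
      exact ordEig_smul hAh ht _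
    rw [s₁, s₂]
    calc (0:ℝ) = t * 0 := by ring
      _ ≤ t * (lamK A k₁ + q * lamK A k₂) := mul_le_mul_of_nonneg_left hAv ht
      _ = t * lamK A k₁ + q * (t * lamK A k₂) := by ring

lemma pmin2_cone {p : ℝ} (hn : 2 ≤ n) (hp : 1 ≤ p) : IsConeSubequation (Pmin2 n p) :=
  model_cone (q := p - 1) (by linarith) (by omega) (by omega)

lemma pminmax_cone {p : ℝ} (hn : 2 ≤ n) (hp : 1 ≤ p) : IsConeSubequation (PminMax n p) :=
  model_cone (q := p - 1) (by linarith) (by omega) (by omega : n - 1 < n)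

lemma pmin2_subset_pminmax {p : ℝ} (hn : 2 ≤ n) (hp : 1 ≤ p) :
    Pmin2 n p ⊆ PminMax n p := by
  rintro A ⟨hAs, hAv⟩
  refine ⟨hAs, ?_⟩
  have hAh := herm_of_symm hAs
  have h1 : (1:ℕ) < n := by omega
  have h2 : n - 1 < n := by omega
  have hmono : lamK A 1 ≤ lamK A (n-1) := by
    rw [lamK_eq (A := A) h1, lamK_eq (A := A) h2]
    exact ordEig_monotone hAh (by exact Fin.mk_le_mk.mpr (by omega))
  nlinarith

-- ### the boundary matrices B_p(e)

lemma bmat_eq (p : ℝ) (e : EucSp n) :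
    ((1 : Mat n) - projMat e) - (p - 1) • projMat e
      = (1:ℝ) • ((1 : Mat n) - projMat e) + (1 - p) • projMat e := by
  rw [one_smul, sub_eq_add_neg, ← neg_smul]
  congr 1
  congr 1
  ring

lemma bmat_herm (p : ℝ) (e : EucSp n) :
    (((1 : Mat n) - projMat e) - (p - 1) • projMat e).IsHermitian :=
  (Matrix.isHermitian_one.sub (projMat_herm e)).sub (herm_smul (projMat_herm e) _)

lemma bmat_sub_ordEig (hn : 2 ≤ n) {e : EucSp n} (he : ‖e‖ = 1) {p t : ℝ} (hp : 1 ≤ p)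
    (ht : 0 ≤ t) :
    ordEig ((((1 : Mat n) - projMat e) - (p - 1) • projMat e) - t • projMat e)
      = fun k => if k = ⟨0, by omega⟩ then 1 - p - t else 1 := by
  have hid : (((1 : Mat n) - projMat e) - (p - 1) • projMat e) - t • projMat e
      = (1:ℝ) • ((1 : Mat n) - projMat e) + (1 - p - t) • projMat e := by
    rw [bmat_eq, add_sub_assoc, ← sub_smul]
  rw [hid]
  exact ordEig_mix he (by linarith) (by omega)

lemma bmat_sub_lamK (hn : 2 ≤ n) {e : EucSp n} (he : ‖e‖ = 1) {p t : ℝ} (hp : 1 ≤ p)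
    (ht : 0 ≤ t) {k : ℕ} (hk : k < n) :
    lamK ((((1 : Mat n) - projMat e) - (p - 1) • projMat e) - t • projMat e) k
      = if k = 0 then 1 - p - t else 1 := by
  rw [lamK_eq hk, bmat_sub_ordEig hn he hp ht]
  by_cases h : k = 0
  · subst h; simp
  · simp [Fin.ext_iff, h]

lemma bmat_lamK (hn : 2 ≤ n) {e : EucSp n} (he : ‖e‖ = 1) {p : ℝ} (hp : 1 ≤ p)
    {k : ℕ} (hk : k < n) :
    lamK (((1 : Mat n) - projMat e) - (p - 1) • projMat e) k = if k = 0 then 1 - p else 1 := by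
  have h := bmat_sub_lamK hn he hp (le_refl 0) hk
  rw [zero_smul, sub_zero] at h
  rw [h]
  by_cases hk0 : k = 0 <;> simp [hk0]

lemma bmat_mem_pmin2 (hn : 2 ≤ n) {e : EucSp n} (he : ‖e‖ = 1) {p : ℝ} (hp : 1 ≤ p) :
    ((1 : Mat n) - projMat e) - (p - 1) • projMat e ∈ Pmin2 n p := by
  refine ⟨symm_of_herm (bmat_herm p e), ?_⟩
  rw [bmat_lamK hn he hp (by omega : (0:ℕ) < n), bmat_lamK hn he hp (by omega : (1:ℕ) < n)]
  norm_num

lemma bmat_sub_not_pminmax (hn : 2 ≤ n) {e : EucSp n} (he : ‖e‖ = 1) {p t : ℝ} (hp : 1 ≤ p)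
    (ht : 0 < t) :
    (((1 : Mat n) - projMat e) - (p - 1) • projMat e) - t • projMat e ∉ PminMax n p := by
  rintro ⟨-, hval⟩
  rw [bmat_sub_lamK hn he hp ht.le (by omega), bmat_sub_lamK hn he hp ht.le (by omega : n - 1 < n)] at hval
  rw [if_pos rfl, if_neg (by omega)] at hval
  linarith

-- ### frontier membership from sandwich

lemma bmat_frontier {p : ℝ} (hn : 2 ≤ n) (hp : 1 ≤ p) {F : Set (Mat n)}
    (hsub1 : Pmin2 n p ⊆ F) (hsub2 : F ⊆ PminMax n p) {e : EucSp n} (he : ‖e‖ = 1) :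
    ((1 : Mat n) - projMat e) - (p - 1) • projMat e ∈ symFrontier F := by
  constructor
  · exact subset_closure (hsub1 (bmat_mem_pmin2 hn he hp))
  · rintro ⟨U, hU, hUF⟩
    obtain ⟨t, ht, htU⟩ := exists_pos_sub_smul_mem (P := projMat e) hU
    have hsymm : ((((1 : Mat n) - projMat e) - (p - 1) • projMat e) - t • projMat e).IsSymm :=
      symm_of_herm ((bmat_herm p e).sub (herm_smul (projMat_herm e) t))
    exact bmat_sub_not_pminmax hn he hp ht (hsub2 (hUF _ htU hsymm))

lemma riesz_of_sandwich {p : ℝ} (hn : 2 ≤ n) (hp : 1 ≤ p) {F : Set (Mat n)}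
    (hsub1 : Pmin2 n p ⊆ F) (hsub2 : F ⊆ PminMax n p) : HasRieszChar F p :=
  ⟨hp, fun _ he => bmat_frontier hn hp hsub1 hsub2 he⟩

-- ### forward direction, part 1 : Pmin2 ⊆ F

lemma riesz_sub1 {p : ℝ} (hn : 2 ≤ n) (hp : 1 ≤ p) {F : Set (Mat n)}
    (hF : IsConeSubequation F) (hR : HasRieszChar F p) : Pmin2 n p ⊆ F := by
  rintro A ⟨hAs, hAv⟩
  have hAh := herm_of_symm hAs
  have hn0 : 0 < n := by omega
  set k0 : Fin n := ⟨0, hn0⟩ with hk0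
  set k1 : Fin n := ⟨1, by omega⟩ with hk1
  set l1 := ordEig A k0 with hl1
  set l2 := ordEig A k1 with hl2
  have hval : 0 ≤ l1 + (p - 1) * l2 := by
    rw [lamK_eq (by omega : (0:ℕ) < n), lamK_eq (by omega : (1:ℕ) < n)] at hAv
    exact hAv
  have hmono : l1 ≤ l2 := ordEig_monotone hAh (Fin.mk_le_mk.mpr (by omega))
  have hl2nn : 0 ≤ l2 := by nlinarith
  set e : EucSp n := sortedBasis hAh k0 with hedef
  have he : ‖e‖ = 1 := sortedBasis_norm hAh k0
  have hBe : ((1 : Mat n) - projMat e) - (p - 1) • projMat e ∈ F := by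
    have h := (hR.2 e he).1
    rwa [hF.1.2.1.closure_eq] at h
  rcases eq_or_lt_of_le hl2nn with hl2z | hl2pos
  · have hApsd : A.PosSemidef := psd_of_ordEig_nonneg hAh hn0 (by nlinarith)
    have h0F : (0 : Mat n) ∈ F := by
      have := hF.2 _ hBe 0 le_rfl
      rwa [zero_smul] at this
    have := hF.1.2.2 0 h0F A hApsd
    rwa [zero_add] at this
  · have hratio : -(p-1) ≤ l1 / l2 := (le_div_iff₀ hl2pos).mpr (by nlinarith)
    have hC : ((1 : Mat n) - projMat e) + (l1 / l2) • projMat e ∈ F := by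
      have hpsd : ((l1 / l2 + (p - 1)) • projMat e).PosSemidef :=
        psd_smul (projMat_psd e) (by linarith)
      have hmem := hF.1.2.2 _ hBe _ hpsd
      have hid : (((1 : Mat n) - projMat e) - (p - 1) • projMat e)
          + (l1 / l2 + (p - 1)) • projMat e
          = ((1 : Mat n) - projMat e) + (l1 / l2) • projMat e := by
        module
      rwa [hid] at hmem
    have hC2 : l2 • (((1 : Mat n) - projMat e) + (l1 / l2) • projMat e) ∈ F :=
      hF.2 _ hC l2 hl2nn
    have hid2 : l2 • (((1 : Mat n) - projMat e) + (l1 / l2) • projMat e)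
        = l2 • ((1 : Mat n) - projMat e) + l1 • projMat e := by
      rw [smul_add, smul_smul, mul_div_cancel₀ _ (ne_of_gt hl2pos)]
    rw [hid2] at hC2
    have hpsd2 := psd_sub_lower hAh hn0 k1 (fun i hi => by
      have hne : (i : ℕ) ≠ 0 := fun h => hi (Fin.ext (by simp [hk0, h]))
      exact Fin.mk_le_mk.mpr (by omega))
    have hfin := hF.1.2.2 _ hC2 _ hpsd2
    have hid3 : (l2 • ((1 : Mat n) - projMat e) + l1 • projMat e)
        + (A - (l2 • ((1 : Mat n) - projMat e) + l1 • projMat e)) = A := by abel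
    rwa [hid3] at hfin

-- ### forward direction, part 2 : F ⊆ PminMax

lemma riesz_sub2 {p : ℝ} (hn : 2 ≤ n) (hp : 1 ≤ p) {F : Set (Mat n)}
    (hF : IsConeSubequation F) (hR : HasRieszChar F p) : F ⊆ PminMax n p := by
  intro A hAF
  have hAs : A.IsSymm := hF.1.1 A hAF
  have hAh := herm_of_symm hAs
  have hn0 : 0 < n := by omega
  set k0 : Fin n := ⟨0, hn0⟩ with hk0
  set kN : Fin n := ⟨n - 1, by omega⟩ with hkNdef
  set l1 := ordEig A k0 with hl1
  set lN := ordEig A kN with hlN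
  by_contra hnot
  have hlt : l1 + (p - 1) * lN < 0 := by
    by_contra hge
    push_neg at hge
    refine hnot ⟨hAs, ?_⟩
    rw [lamK_eq (by omega : (0:ℕ) < n), lamK_eq (by omega : n - 1 < n)]
    exact hge
  have hmono : l1 ≤ lN := ordEig_monotone hAh (Fin.mk_le_mk.mpr (by omega))
  set e : EucSp n := sortedBasis hAh k0 with hedef
  have he : ‖e‖ = 1 := sortedBasis_norm hAh k0
  have hpsdU := psd_sub_upper hAh hn0 kN (fun i => by
    have := i.isLt
    exact Fin.mk_le_mk.mpr (by omega) |>.trans_eq rfl |>.trans (le_of_eq rfl) |>.trans (le_refl _) |>.trans (le_refl _) |>.trans (le_refl _))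
  have hD : lN • ((1 : Mat n) - projMat e) + l1 • projMat e ∈ F := by
    have hmem := hF.1.2.2 A hAF _ hpsdU
    have hid : A + ((lN • ((1:Mat n) - projMat e) + l1 • projMat e) - A)
        = lN • ((1:Mat n) - projMat e) + l1 • projMat e := by abel
    rwa [hid] at hmem
  obtain ⟨s, hs, hsF⟩ : ∃ s : ℝ, p - 1 < s ∧ ((1 : Mat n) - projMat e) - s • projMat e ∈ F := by
    by_cases hlN0 : 0 < lN
    · refine ⟨-(l1/lN), ?_, ?_⟩
      · have h1 : l1 / lN < -(p-1) := (div_lt_iff₀ hlN0).mpr (by nlinarith)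
        linarith
      · have hmem := hF.2 _ hD (1/lN) (by positivity)
        have hid : (1/lN) • (lN • ((1:Mat n) - projMat e) + l1 • projMat e)
            = ((1:Mat n) - projMat e) - (-(l1/lN)) • projMat e := by
          have hne : lN ≠ 0 := ne_of_gt hlN0
          match_scalars <;> field_simp <;> ring
        rwa [hid] at hmem
    · push_neg at hlN0
      have hl1neg : l1 < 0 := by nlinarith
      have htpos : 0 < p / (-l1) := div_pos (by linarith) (by linarith)
      have htl1 : (p / (-l1)) * l1 = -p := by
        have hne : l1 ≠ 0 := ne_of_lt hl1neg
        field_simp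
      have h1 : (p / (-l1)) • (lN • ((1:Mat n) - projMat e) + l1 • projMat e) ∈ F :=
        hF.2 _ hD _ htpos.le
      have hpsd1 : ((1 - (p / (-l1))*lN) • ((1:Mat n) - projMat e)).PosSemidef :=
        psd_smul (one_sub_projMat_psd he) (by nlinarith)
      have h2 := hF.1.2.2 _ h1 _ hpsd1
      refine ⟨p, by linarith, ?_⟩
      have hid : (p / (-l1)) • (lN • ((1:Mat n) - projMat e) + l1 • projMat e)
          + (1 - (p / (-l1))*lN) • ((1:Mat n) - projMat e)
          = ((1:Mat n) - projMat e) + ((p / (-l1)) * l1) • projMat e := by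
        module
      rw [hid, htl1] at h2
      have hid2 : ((1:Mat n) - projMat e) + (-p) • projMat e
          = ((1:Mat n) - projMat e) - p • projMat e := by
        module
      rwa [hid2] at h2
  -- now B_p(e) is in the relative interior of F : contradiction
  have hs1 : 0 < 1 + s := by linarith
  set c := min (1/2 : ℝ) ((s - (p-1))/(1+s)) with hcdef
  have hcpos : 0 < c := lt_min (by norm_num) (div_pos (by linarith) hs1)
  set δ := c / (n+1) with hδdef
  have hδpos : 0 < δ := div_pos hcpos (by positivity)
  have hu0 : (0:ℝ) ≤ (n:ℝ) * δ := by positivity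
  have huc : (n:ℝ) * δ ≤ c := by
    calc (n:ℝ) * δ = c * ((n:ℝ)/(n+1)) := by rw [hδdef]; ring
      _ ≤ c * 1 := mul_le_mul_of_nonneg_left ((div_le_one (by positivity)).mpr (by linarith)) hcpos.le
      _ = c := mul_one c
  have huhalf : (n:ℝ) * δ ≤ 1/2 := le_trans huc (min_le_left _ _)
  have hucond : ((n:ℝ) * δ) * (1+s) ≤ s - (p-1) :=
    (le_div_iff₀ hs1).mp (le_trans huc (min_le_right _ _))
  have hint : (((1 : Mat n) - projMat e) - (p - 1) • projMat e) ∈ symInterior F := by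
    refine ⟨{B : Mat n | ∀ i j,
      |B i j - ((((1 : Mat n) - projMat e) - (p - 1) • projMat e)) i j| < δ},
      entry_ball_mem_nhds _ hδpos, ?_⟩
    intro B hB hBs
    have hstep1 : (((1 : Mat n) - projMat e) - (p - 1) • projMat e) - ((n:ℝ)*δ) • 1 ∈ F := by
      have hmem := hF.2 _ hsF (1 - (n:ℝ)*δ) (by linarith)
      have hr : 0 ≤ (1-(n:ℝ)*δ)*s - (p-1) - (n:ℝ)*δ := by nlinarith
      have hpsdr : (((1-(n:ℝ)*δ)*s - (p-1) - (n:ℝ)*δ) • projMat e).PosSemidef :=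
        psd_smul (projMat_psd e) hr
      have hmem2 := hF.1.2.2 _ hmem _ hpsdr
      have hid : (1-(n:ℝ)*δ) • (((1 : Mat n) - projMat e) - s • projMat e)
          + ((1-(n:ℝ)*δ)*s - (p-1) - (n:ℝ)*δ) • projMat e
          = (((1 : Mat n) - projMat e) - (p - 1) • projMat e) - ((n:ℝ)*δ) • 1 := by
        module
      rwa [hid] at hmem2
    have hentry : ∀ i j,
        |((((1 : Mat n) - projMat e) - (p - 1) • projMat e) - B) i j| ≤ δ := by
      intro i j
      have h := (hB i j).le
      calc |((((1 : Mat n) - projMat e) - (p - 1) • projMat e) - B) i j|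
          = |B i j - ((((1 : Mat n) - projMat e) - (p - 1) • projMat e)) i j| := by
            rw [Matrix.sub_apply, abs_sub_comm]
        _ ≤ δ := h
    have hpsdB := entries_psd ((bmat_herm p e).sub (herm_of_symm hBs)) hδpos.le hentry
    have hmem3 := hF.1.2.2 _ hstep1 _ hpsdB
    have hid4 : ((((1 : Mat n) - projMat e) - (p - 1) • projMat e) - ((n:ℝ)*δ) • 1)
        + (((n:ℝ)*δ) • 1 - ((((1 : Mat n) - projMat e) - (p - 1) • projMat e) - B)) = B := by
      abel
    rwa [hid4] at hmem3
  exact (hR.2 e he).2 hint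

end Aux

/-- An ST-invariant cone subequation has finite Riesz characteristic `p` iff
`𝒫_p^{min/2} ⊆ F ⊆ 𝒫_p^{min/max}`; in particular both of these extreme sets are
cone subequations of Riesz characteristic `p`. -/
theorem stmt4 (n : ℕ) (hn : 2 ≤ n) (p : ℝ) (hp : 1 ≤ p)
    (F : Set (Matrix (Fin n) (Fin n) ℝ))
    (hF : IsConeSubequation F) (hST : STInvariant F) :
    (HasRieszChar F p ↔ Pmin2 n p ⊆ F ∧ F ⊆ PminMax n p) ∧
    IsConeSubequation (Pmin2 n p) ∧ HasRieszChar (Pmin2 n p) p ∧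
    IsConeSubequation (PminMax n p) ∧ HasRieszChar (PminMax n p) p := by
  have h1 : Pmin2 n p ⊆ PminMax n p := pmin2_subset_pminmax hn hp
  exact ⟨⟨fun hR => ⟨riesz_sub1 hn hp hF hR, riesz_sub2 hn hp hF hR⟩,
    fun h => riesz_of_sandwich hn hp h.1 h.2⟩,
    pmin2_cone hn hp, riesz_of_sandwich hn hp subset_rfl h1,
    pminmax_cone hn hp, riesz_of_sandwich hn hp h1 subset_rfl⟩

end
end
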